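/- arXiv:0812.2718 — 5 statements merged into one kernel-verified Lean document; each statement's English description precedes it below -/
import Mathlib

section
/- (Stepin's theorem.) Let G be a countable group and H ≤ G a subgroup. Suppose H is Ornstein: for all countable sets K₁, K₂ with probability measures κ₁, κ₂ satisfying H(κ₁) = H(κ₂), the Bernoulli shifts (H, K₁^H, κ₁^H) and (H, K₂^H, κ₂^H) are measurably conjugate. Then G is Ornstein: for all countable sets L₁, L₂ with probability measures λ₁, λ₂ satisfying H(λ₁) = H(λ₂), the Bernoulli shifts (G, L₁^G, λ₁^G) and (G, L₂^G, λ₂^G) are measurably conjugate. -/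
open MeasureTheory ENNReal

/-- The Bernoulli shift action of a group `G` on `G → K`: `(g • x) f = x (g⁻¹ * f)`. -/
def bshift (G K : Type*) [Group G] (g : G) (x : G → K) : G → K :=
  fun f => x (g⁻¹ * f)

/-- `μ` is the product of the probability measures `κ i`: it is a probability measure
giving every measurable cylinder set the product of the measures of its sides.
(For probability measures this characterizes the product measure uniquely.) -/
def IsProductMeasure {ι : Type*} {K : ι → Type*} [∀ i, MeasurableSpace (K i)]
    (μ : Measure (∀ i, K i)) (κ : ∀ i, Measure (K i)) : Prop :=
  IsProbabilityMeasure μ ∧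
    ∀ (s : Finset ι) (A : ∀ i, Set (K i)), (∀ i ∈ s, MeasurableSet (A i)) →
      μ {x | ∀ i ∈ s, x i ∈ A i} = ∏ i ∈ s, κ i (A i)

/-- `φ` is a factor map, from the system given by the maps `T g` on `(X, μ)` to the system
given by the maps `S g` on `(Y, ν)`, relative to the invariant set `X'` of full measure. -/
def IsFactorMapOn {ι X Y : Type*} [MeasurableSpace X] [MeasurableSpace Y]
    (T : ι → X → X) (S : ι → Y → Y) (μ : Measure X) (ν : Measure Y)
    (φ : X → Y) (X' : Set X) : Prop :=
  Measurable φ ∧ (∀ g, Set.MapsTo (T g) X' X') ∧ μ X'ᶜ = 0 ∧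
    (∀ g, ∀ x ∈ X', φ (T g x) = S g (φ x)) ∧ Measure.map φ μ = ν

/-- `φ` is a factor map from the system `(T, μ)` to the system `(S, ν)`:  it is measurable,
pushes `μ` forward to `ν`, and is equivariant on some invariant set of full measure. -/
def IsFactorMap {ι X Y : Type*} [MeasurableSpace X] [MeasurableSpace Y]
    (T : ι → X → X) (S : ι → Y → Y) (μ : Measure X) (ν : Measure Y)
    (φ : X → Y) : Prop :=
  ∃ X' : Set X, IsFactorMapOn T S μ ν φ X'

/-- `φ` is a measure-conjugacy: a factor map which is injective on the invariant full-measure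
set, with a measurable inverse. -/
def IsMeasureConjugacy {ι X Y : Type*} [MeasurableSpace X] [MeasurableSpace Y]
    (T : ι → X → X) (S : ι → Y → Y) (μ : Measure X) (ν : Measure Y)
    (φ : X → Y) : Prop :=
  ∃ X' : Set X, IsFactorMapOn T S μ ν φ X' ∧ Set.InjOn φ X' ∧
    ∃ ψ : Y → X, Measurable ψ ∧ ∀ x ∈ X', ψ (φ x) = x

/-- The two systems are measurably conjugate: there are factor maps in both directions that
are inverse to each other almost everywhere. -/
def IsMeasConj {ι X Y : Type*} [MeasurableSpace X] [MeasurableSpace Y]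
    (T : ι → X → X) (S : ι → Y → Y) (μ : Measure X) (ν : Measure Y) : Prop :=
  ∃ (φ : X → Y) (ψ : Y → X), IsFactorMap T S μ ν φ ∧ IsFactorMap S T ν μ ψ ∧
    (∀ᵐ x ∂μ, ψ (φ x) = x) ∧ (∀ᵐ y ∂ν, φ (ψ y) = y)

/-- The entropy `H(κ) = -∑ₖ κ({k}) log κ({k}) ∈ [0,∞]` of a measure on a countable space. -/
noncomputable def measEntropy {K : Type*} [MeasurableSpace K] (κ : Measure K) : ℝ≥0∞ :=
  ∑' k : K, ENNReal.ofReal (Real.negMulLog (κ {k}).toReal)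

/-- A countable group `Γ` is *Ornstein* if any two Bernoulli shifts over `Γ` whose countable
base spaces have equal entropy are measurably conjugate. -/
def IsOrnstein (Γ : Type) [Group Γ] [Countable Γ] : Prop :=
  ∀ (K₁ K₂ : Type) (_ : MeasurableSpace K₁) (_ : MeasurableSpace K₂),
    MeasurableSingletonClass K₁ → MeasurableSingletonClass K₂ →
    Countable K₁ → Countable K₂ →
    ∀ (κ₁ : Measure K₁) (κ₂ : Measure K₂),
      IsProbabilityMeasure κ₁ → IsProbabilityMeasure κ₂ →
      measEntropy κ₁ = measEntropy κ₂ →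
      ∀ (μ₁ : Measure (Γ → K₁)) (μ₂ : Measure (Γ → K₂)),
        IsProductMeasure μ₁ (fun _ => κ₁) → IsProductMeasure μ₂ (fun _ => κ₂) →
        IsMeasConj (bshift Γ K₁) (bshift Γ K₂) μ₁ μ₂

set_option linter.unusedSectionVars false
section StepinAux

open MeasureTheory ProbabilityTheory

namespace Stepin

variable {I J K : Type*} [MeasurableSpace K]

/-- A measurable box cylinder set. -/
def cylSet (s : Finset I) (A : I → Set K) : Set (I → K) := {x | ∀ i ∈ s, x i ∈ A i}

theorem measurableSet_cylSet {s : Finset I} {A : I → Set K}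
    (hA : ∀ i ∈ s, MeasurableSet (A i)) : MeasurableSet (cylSet s A) := by
  have h : cylSet s A = ⋂ i ∈ s, (fun x : I → K => x i) ⁻¹' A i := by
    ext x; simp [cylSet]
  rw [h]
  exact Finset.measurableSet_biInter s fun i hi => measurable_pi_apply i (hA i hi)

/-- The collection of measurable box cylinder sets. -/
def cyls (I K : Type*) [MeasurableSpace K] : Set (Set (I → K)) :=
  {S | ∃ (s : Finset I) (A : I → Set K), (∀ i ∈ s, MeasurableSet (A i)) ∧ S = cylSet s A}

theorem cylSet_inter [DecidableEq I] (s s' : Finset I) (A A' : I → Set K) :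
    cylSet s A ∩ cylSet s' A' =
      cylSet (s ∪ s') (fun i =>
        (if i ∈ s then A i else Set.univ) ∩ (if i ∈ s' then A' i else Set.univ)) := by
  ext x
  simp only [cylSet, Set.mem_inter_iff, Set.mem_setOf_eq, Finset.mem_union]
  constructor
  · rintro ⟨h1, h2⟩ i _
    constructor
    · split_ifs with h
      · exact h1 i h
      · trivial
    · split_ifs with h
      · exact h2 i h
      · trivial
  · intro h
    constructor
    · intro i hi
      have := (h i (Or.inl hi)).1
      rwa [if_pos hi] at this
    · intro i hi
      have := (h i (Or.inr hi)).2
      rwa [if_pos hi] at this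

theorem isPiSystem_cyls : IsPiSystem (cyls I K) := by
  classical
  rintro S ⟨s, A, hA, rfl⟩ S' ⟨s', A', hA', rfl⟩ -
  refine ⟨s ∪ s', fun i =>
    (if i ∈ s then A i else Set.univ) ∩ (if i ∈ s' then A' i else Set.univ), ?_, ?_⟩
  · intro i _
    refine MeasurableSet.inter ?_ ?_
    · split_ifs with h
      · exact hA i h
      · exact MeasurableSet.univ
    · split_ifs with h
      · exact hA' i h
      · exact MeasurableSet.univ
  · exact cylSet_inter s s' A A'

theorem pi_eq_generateFrom_cyls :
    (MeasurableSpace.pi : MeasurableSpace (I → K)) = MeasurableSpace.generateFrom (cyls I K) := by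
  classical
  apply le_antisymm
  · rw [MeasurableSpace.pi]
    refine iSup_le fun i => ?_
    intro S hS
    obtain ⟨A, hA, rfl⟩ := MeasurableSpace.measurableSet_comap.mp hS
    apply MeasurableSpace.measurableSet_generateFrom
    refine ⟨{i}, Function.update (fun _ => Set.univ) i A, ?_, ?_⟩
    · intro j hj
      rw [Finset.mem_singleton] at hj
      subst hj
      simpa using hA
    · ext x
      simp [cylSet, Function.update]
  · refine MeasurableSpace.generateFrom_le ?_
    rintro S ⟨s, A, hA, rfl⟩
    exact measurableSet_cylSet hA

theorem isProductMeasure_unique {μ μ' : Measure (I → K)} {κ : I → Measure K}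
    (h : IsProductMeasure μ κ) (h' : IsProductMeasure μ' κ) : μ = μ' := by
  haveI := h.1
  haveI := h'.1
  refine ext_of_generate_finite _ pi_eq_generateFrom_cyls isPiSystem_cyls ?_ ?_
  · rintro S ⟨s, A, hA, rfl⟩
    show μ (cylSet s A) = μ' (cylSet s A)
    rw [show μ (cylSet s A) = μ {x | ∀ i ∈ s, x i ∈ A i} from rfl,
      show μ' (cylSet s A) = μ' {x | ∀ i ∈ s, x i ∈ A i} from rfl, h.2 s A hA, h'.2 s A hA]
  · rw [h.1.measure_univ, h'.1.measure_univ]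

theorem prodMeas_apply_inj {μ : Measure (I → K)} {κ : Measure K}
    (hμ : IsProductMeasure μ (fun _ => κ)) (f : J → I) (s : Finset J)
    (hf : Set.InjOn f ↑s) (A : J → Set K) (hA : ∀ j ∈ s, MeasurableSet (A j)) :
    μ {x | ∀ j ∈ s, x (f j) ∈ A j} = ∏ j ∈ s, κ (A j) := by
  classical
  set A' : I → Set K := fun i => ⋂ j ∈ s.filter (fun j => f j = i), A j with hA'def
  have hfilter : ∀ j ∈ s, s.filter (fun j' => f j' = f j) = {j} := by
    intro j hj
    ext j'
    simp only [Finset.mem_filter, Finset.mem_singleton]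
    constructor
    · rintro ⟨hj', he⟩
      exact hf hj' hj he
    · rintro rfl
      exact ⟨hj, rfl⟩
  have hAf : ∀ j ∈ s, A' (f j) = A j := by
    intro j hj
    rw [hA'def]
    simp only
    rw [hfilter j hj]
    simp
  have hset : {x : I → K | ∀ j ∈ s, x (f j) ∈ A j} = {x | ∀ i ∈ s.image f, x i ∈ A' i} := by
    ext x
    simp only [Set.mem_setOf_eq]
    constructor
    · intro h i hi
      simp only [hA'def, Set.mem_iInter]
      intro j' hj'
      obtain ⟨hj's, hfj'⟩ := Finset.mem_filter.mp hj'
      rw [← hfj']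
      exact h j' hj's
    · intro h j hj
      have := h (f j) (Finset.mem_image_of_mem f hj)
      rwa [hAf j hj] at this
  have hA'meas : ∀ i ∈ s.image f, MeasurableSet (A' i) := by
    intro i hi
    obtain ⟨j, hj, rfl⟩ := Finset.mem_image.mp hi
    rw [hAf j hj]
    exact hA j hj
  rw [hset, hμ.2 (s.image f) A' hA'meas,
    Finset.prod_image (fun j hj j' hj' h => hf hj hj' h)]
  exact Finset.prod_congr rfl fun j hj => by rw [hAf j hj]

theorem isProductMeasure_map_comp {μ : Measure (I → K)} {κ : Measure K}
    (hμ : IsProductMeasure μ (fun _ => κ)) {e : J → I} (he : Function.Injective e) :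
    IsProductMeasure (Measure.map (fun x (j : J) => x (e j)) μ) (fun _ => κ) := by
  haveI := hμ.1
  have hm : Measurable (fun (x : I → K) (j : J) => x (e j)) :=
    measurable_pi_lambda _ fun j => measurable_pi_apply (e j)
  constructor
  · exact Measure.isProbabilityMeasure_map hm.aemeasurable
  · intro s A hA
    show Measure.map (fun x (j : J) => x (e j)) μ (cylSet s A) = ∏ j ∈ s, κ (A j)
    rw [Measure.map_apply hm (measurableSet_cylSet hA)]
    have hpre : (fun x (j : J) => x (e j)) ⁻¹' cylSet s A
        = {x : I → K | ∀ j ∈ s, x (e j) ∈ A j} := rfl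
    rw [hpre]
    exact prodMeas_apply_inj hμ e s (fun a _ b _ h => he h) A hA

theorem prodMeas_iInter {I I' J K : Type*} [MeasurableSpace K]
    {μ : Measure (I → K)} {κ : Measure K} (hμ : IsProductMeasure μ (fun _ => κ))
    {ν : Measure (I' → K)} (hν : IsProductMeasure ν (fun _ => κ))
    (e : J → I' → I) (he : ∀ j, Function.Injective (e j))
    (hdisj : ∀ j j', j ≠ j' → ∀ i' i'', e j i' ≠ e j' i'')
    (sc : Finset J) (B : J → Set (I' → K)) (hB : ∀ j ∈ sc, MeasurableSet (B j)) :
    μ (⋂ j ∈ sc, (fun x i' => x (e j i')) ⁻¹' B j) = ∏ j ∈ sc, ν (B j) := by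
  classical
  haveI := hμ.1
  set m : J → MeasurableSpace (I → K) :=
    fun j => MeasurableSpace.comap (fun (x : I → K) (i' : I') => x (e j i'))
      MeasurableSpace.pi with hmdef
  have hmeasR : ∀ j, Measurable (fun (x : I → K) (i' : I') => x (e j i')) := fun j =>
    measurable_pi_lambda _ fun i' => measurable_pi_apply _
  have hmap : ∀ j, Measure.map (fun (x : I → K) (i' : I') => x (e j i')) μ = ν := fun j =>
    isProductMeasure_unique (isProductMeasure_map_comp hμ (he j)) hν
  set π : J → Set (Set (I → K)) := fun j =>
    {S | ∃ (s : Finset I') (A : I' → Set K), (∀ i' ∈ s, MeasurableSet (A i')) ∧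
      S = (fun (x : I → K) (i' : I') => x (e j i')) ⁻¹' cylSet s A} with hπdef
  have h_le : ∀ j, m j ≤ (MeasurableSpace.pi : MeasurableSpace (I → K)) := fun j =>
    (hmeasR j).comap_le
  have h_pi : ∀ j, IsPiSystem (π j) := by
    intro j
    rintro S ⟨s, A, hA, rfl⟩ S' ⟨s', A', hA', rfl⟩ -
    refine ⟨s ∪ s', fun i =>
      (if i ∈ s then A i else Set.univ) ∩ (if i ∈ s' then A' i else Set.univ), ?_, ?_⟩
    · intro i _
      refine MeasurableSet.inter ?_ ?_
      · split_ifs with h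
        · exact hA i h
        · exact MeasurableSet.univ
      · split_ifs with h
        · exact hA' i h
        · exact MeasurableSet.univ
    · rw [← Set.preimage_inter, cylSet_inter]
  have h_gen : ∀ j, m j = MeasurableSpace.generateFrom (π j) := by
    intro j
    rw [hmdef]
    simp only
    rw [pi_eq_generateFrom_cyls, MeasurableSpace.comap_generateFrom]
    congr 1
    ext S
    constructor
    · rintro ⟨T, ⟨s, A, hA, rfl⟩, rfl⟩
      exact ⟨s, A, hA, rfl⟩
    · rintro ⟨s, A, hA, rfl⟩
      exact ⟨cylSet s A, ⟨s, A, hA, rfl⟩, rfl⟩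
  have h_ind : iIndepSets π μ := by
    rw [iIndepSets_iff]
    intro t f hf
    have hf' : ∀ j, ∃ (s : Finset I') (A : I' → Set K),
        (∀ i' ∈ s, MeasurableSet (A i')) ∧
        (j ∈ t → f j = (fun (x : I → K) (i' : I') => x (e j i')) ⁻¹' cylSet s A) := by
      intro j
      by_cases hj : j ∈ t
      · obtain ⟨s, A, hA, hEq⟩ := hf j hj
        exact ⟨s, A, hA, fun _ => hEq⟩
      · exact ⟨∅, fun _ => Set.univ, by simp, fun h => absurd h hj⟩
    choose s A hA hfeq using hf'
    have hseteq : (⋂ j ∈ t, f j)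
        = {x : I → K | ∀ q ∈ t.sigma (fun j => s j), x (e q.1 q.2) ∈ A q.1 q.2} := by
      ext x
      simp only [Set.mem_iInter, Set.mem_setOf_eq]
      constructor
      · rintro h ⟨j, i'⟩ hq
        obtain ⟨hj, hi'⟩ := Finset.mem_sigma.mp hq
        have hx := h j hj
        rw [hfeq j hj] at hx
        exact hx i' hi'
      · intro h j hj
        rw [hfeq j hj]
        intro i' hi'
        exact h ⟨j, i'⟩ (Finset.mem_sigma.mpr ⟨hj, hi'⟩)
    have hinj : Set.InjOn (fun q : (_ : J) × I' => e q.1 q.2) ↑(t.sigma fun j => s j) := by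
      rintro ⟨j, i⟩ _ ⟨j', i''⟩ _ hq
      by_cases hjj : j = j'
      · subst hjj
        have := he j hq
        subst this
        rfl
      · exact absurd hq (hdisj j j' hjj i i'')
    have hAA : ∀ q ∈ t.sigma (fun j => s j), MeasurableSet (A q.1 q.2) := by
      rintro ⟨j, i⟩ hq
      exact hA j i (Finset.mem_sigma.mp hq).2
    rw [hseteq,
      prodMeas_apply_inj hμ (fun q : (_ : J) × I' => e q.1 q.2) _ hinj
        (fun q => A q.1 q.2) hAA,
      Finset.prod_sigma]
    refine Finset.prod_congr rfl fun j hj => ?_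
    rw [hfeq j hj]
    have hpre : (fun (x : I → K) (i' : I') => x (e j i')) ⁻¹' cylSet (s j) (A j)
        = {x : I → K | ∀ i' ∈ s j, x (e j i') ∈ A j i'} := rfl
    rw [hpre, prodMeas_apply_inj hμ (e j) (s j) (fun a _ b _ h => he j h) (A j) (hA j)]
  have hiI : iIndep m μ := iIndepSets.iIndep (m := m) h_le π h_pi h_gen h_ind
  have hres := hiI.meas_biInter (S := sc)
    (s := fun j => (fun (x : I → K) (i' : I') => x (e j i')) ⁻¹' B j)
    (fun j hj => MeasurableSpace.measurableSet_comap.mpr ⟨B j, hB j hj, rfl⟩)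
  rw [hres]
  refine Finset.prod_congr rfl fun j hj => ?_
  rw [← hmap j, Measure.map_apply (hmeasR j) (hB j hj)]

end Stepin

end StepinAux
section StepinGroup

open MeasureTheory ProbabilityTheory

namespace Stepin

variable {G : Type} [Group G] [Countable G]

/-- A transversal for the left cosets of `H` in `G`. -/
noncomputable def tv (H : Subgroup G) (c : G ⧸ H) : G := Quotient.out c

/-- The `H`-component of `g` relative to the transversal. -/
noncomputable def sg (H : Subgroup G) (g : G) : H :=
  ⟨(tv H (g : G ⧸ H))⁻¹ * g, QuotientGroup.eq.mp (QuotientGroup.out_eq' _)⟩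

theorem tv_mul_sg (H : Subgroup G) (g : G) : tv H (g : G ⧸ H) * (sg H g : G) = g :=
  mul_inv_cancel_left _ _

theorem mk_tv_mul (H : Subgroup G) (c : G ⧸ H) (h : H) :
    ((tv H c * (h : G) : G) : G ⧸ H) = c := by
  rw [QuotientGroup.mk_mul_of_mem _ h.2]
  exact QuotientGroup.out_eq' c

theorem sg_tv_mul (H : Subgroup G) (c : G ⧸ H) (h : H) : sg H (tv H c * (h : G)) = h := by
  apply Subtype.ext
  show (tv H ((tv H c * (h : G) : G) : G ⧸ H))⁻¹ * (tv H c * (h : G)) = (h : G)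
  rw [mk_tv_mul H c h, inv_mul_cancel_left]

/-- Restriction of a configuration to the coset `c`, read through the transversal. -/
noncomputable def Rv (H : Subgroup G) {K : Type*} (x : G → K) (c : G ⧸ H) : H → K :=
  fun h => x (tv H c * (h : G))

/-- The lift of a map on `H`-configurations to a map on `G`-configurations, applied
coset by coset. -/
noncomputable def liftMap (H : Subgroup G) {K K' : Type*}
    (φ : (H → K) → (H → K')) (x : G → K) : G → K' :=
  fun g => φ (Rv H x (g : G ⧸ H)) (sg H g)

theorem Rv_liftMap (H : Subgroup G) {K K' : Type*} (φ : (H → K) → (H → K'))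
    (x : G → K) (c : G ⧸ H) : Rv H (liftMap H φ x) c = φ (Rv H x c) := by
  funext h
  show φ (Rv H x ((tv H c * (h : G) : G) : G ⧸ H)) (sg H (tv H c * (h : G))) = φ (Rv H x c) h
  rw [mk_tv_mul, sg_tv_mul]

theorem liftMap_comp (H : Subgroup G) {K K' : Type*}
    (φ : (H → K) → (H → K')) (ψ : (H → K') → (H → K)) (x : G → K)
    (hx : ∀ c : G ⧸ H, ψ (φ (Rv H x c)) = Rv H x c) :
    liftMap H ψ (liftMap H φ x) = x := by
  funext g
  show ψ (Rv H (liftMap H φ x) (g : G ⧸ H)) (sg H g) = x g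
  rw [Rv_liftMap, hx]
  show x (tv H (g : G ⧸ H) * (sg H g : G)) = x g
  rw [tv_mul_sg]

theorem Rv_bshift (H : Subgroup G) {K : Type*} (g : G) (x : G → K) (c : G ⧸ H) :
    Rv H (bshift G K g x) c
      = bshift H K (sg H (g⁻¹ * tv H c))⁻¹ (Rv H x ((g⁻¹ * tv H c : G) : G ⧸ H)) := by
  funext h
  show x (g⁻¹ * (tv H c * (h : G)))
    = x (tv H ((g⁻¹ * tv H c : G) : G ⧸ H) * ((((sg H (g⁻¹ * tv H c))⁻¹)⁻¹ * h : H) : G))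
  rw [inv_inv]
  show x (g⁻¹ * (tv H c * (h : G)))
    = x (tv H ((g⁻¹ * tv H c : G) : G ⧸ H) * ((sg H (g⁻¹ * tv H c) : G) * (h : G)))
  rw [← mul_assoc, ← mul_assoc, tv_mul_sg]

theorem mk_inv_mul (H : Subgroup G) (g f : G) :
    ((g⁻¹ * f : G) : G ⧸ H) = ((g⁻¹ * tv H (f : G ⧸ H) : G) : G ⧸ H) := by
  conv_lhs => rw [← tv_mul_sg H f]
  rw [← mul_assoc, QuotientGroup.mk_mul_of_mem _ (sg H f).2]

theorem sg_shift (H : Subgroup G) (g f : G) :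
    sg H (g⁻¹ * f) = sg H (g⁻¹ * tv H (f : G ⧸ H)) * sg H f := by
  apply Subtype.ext
  show (tv H ((g⁻¹ * f : G) : G ⧸ H))⁻¹ * (g⁻¹ * f)
    = ((tv H ((g⁻¹ * tv H (f : G ⧸ H) : G) : G ⧸ H))⁻¹ * (g⁻¹ * tv H (f : G ⧸ H)))
      * ((tv H (f : G ⧸ H))⁻¹ * f)
  rw [mk_inv_mul H g f]
  group

end Stepin

end StepinGroup
section StepinLift

open MeasureTheory ProbabilityTheory

namespace Stepin

variable {G : Type} [Group G] [Countable G]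

theorem measurable_Rv (H : Subgroup G) {K : Type*} [MeasurableSpace K] (c : G ⧸ H) :
    Measurable fun x : G → K => Rv H x c :=
  measurable_pi_lambda _ fun h => measurable_pi_apply _

theorem tv_mul_injective (H : Subgroup G) (c : G ⧸ H) :
    Function.Injective fun h : H => tv H c * (h : G) := fun a b hab =>
  Subtype.ext (mul_left_cancel hab)

theorem map_Rv (H : Subgroup G) {K : Type*} [MeasurableSpace K]
    {μ : Measure (G → K)} {κ : Measure K} (hμ : IsProductMeasure μ (fun _ => κ))
    {ν : Measure (H → K)} (hν : IsProductMeasure ν (fun _ => κ)) (c : G ⧸ H) :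
    Measure.map (fun x : G → K => Rv H x c) μ = ν :=
  isProductMeasure_unique (isProductMeasure_map_comp hμ (tv_mul_injective H c)) hν

theorem null_Rv (H : Subgroup G) {K : Type*} [MeasurableSpace K]
    {μ : Measure (G → K)} {κ : Measure K} (hμ : IsProductMeasure μ (fun _ => κ))
    {ν : Measure (H → K)} (hν : IsProductMeasure ν (fun _ => κ))
    {Z : Set (H → K)} (hZ : ν Z = 0) :
    μ {x : G → K | ∃ c : G ⧸ H, Rv H x c ∈ Z} = 0 := by
  haveI : Countable (G ⧸ H) := Quotient.countable
  obtain ⟨N, hNs, hNm, hN0⟩ := exists_measurable_superset_of_null hZ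
  have hsub : {x : G → K | ∃ c : G ⧸ H, Rv H x c ∈ Z}
      ⊆ ⋃ c : G ⧸ H, (fun x : G → K => Rv H x c) ⁻¹' N := by
    rintro x ⟨c, hc⟩
    exact Set.mem_iUnion.mpr ⟨c, hNs hc⟩
  refine measure_mono_null hsub (measure_iUnion_null fun c => ?_)
  rw [← Measure.map_apply (measurable_Rv H c) hNm, map_Rv H hμ hν c]
  exact hN0

theorem liftFactor {K K' : Type*} [MeasurableSpace K] [MeasurableSpace K']
    (H : Subgroup G) {κ : Measure K} {κ' : Measure K'}
    {μ : Measure (G → K)} {μ' : Measure (G → K')}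
    {ν : Measure (H → K)} {ν' : Measure (H → K')}
    (hμ : IsProductMeasure μ (fun _ => κ)) (hμ' : IsProductMeasure μ' (fun _ => κ'))
    (hν : IsProductMeasure ν (fun _ => κ)) (hν' : IsProductMeasure ν' (fun _ => κ'))
    {φ : (H → K) → (H → K')} {Y : Set (H → K)}
    (hφ : IsFactorMapOn (bshift H K) (bshift H K') ν ν' φ Y) :
    IsFactorMapOn (bshift G K) (bshift G K') μ μ' (liftMap H φ)
      {x | ∀ c : G ⧸ H, Rv H x c ∈ Y} := by
  classical
  haveI := hμ.1
  obtain ⟨hφm, hφmt, hφn, hφe, hφmap⟩ := hφ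
  have hlm : Measurable (liftMap H φ) :=
    measurable_pi_lambda _ fun g =>
      (measurable_pi_apply (sg H g)).comp (hφm.comp (measurable_Rv H _))
  refine ⟨hlm, ?_, ?_, ?_, ?_⟩
  · -- invariance
    intro g x hx c
    show Rv H (bshift G K g x) c ∈ Y
    rw [Rv_bshift]
    exact hφmt _ (hx _)
  · -- null complement
    have hcompl : {x : G → K | ∀ c : G ⧸ H, Rv H x c ∈ Y}ᶜ
        = {x : G → K | ∃ c : G ⧸ H, Rv H x c ∈ Yᶜ} := by
      ext x
      simp [not_forall]
    rw [hcompl]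
    exact null_Rv H hμ hν hφn
  · -- equivariance
    intro g x hx
    funext f
    show φ (Rv H (bshift G K g x) (f : G ⧸ H)) (sg H f)
      = φ (Rv H x ((g⁻¹ * f : G) : G ⧸ H)) (sg H (g⁻¹ * f))
    rw [Rv_bshift, hφe _ _ (hx _), mk_inv_mul H g f, sg_shift H g f]
    show φ (Rv H x ((g⁻¹ * tv H (f : G ⧸ H) : G) : G ⧸ H))
        ((((sg H (g⁻¹ * tv H (f : G ⧸ H)))⁻¹)⁻¹ * sg H f : H))
      = φ (Rv H x ((g⁻¹ * tv H (f : G ⧸ H) : G) : G ⧸ H))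
        ((sg H (g⁻¹ * tv H (f : G ⧸ H)) * sg H f : H))
    rw [inv_inv]
  · -- pushforward
    refine isProductMeasure_unique ⟨Measure.isProbabilityMeasure_map hlm.aemeasurable, ?_⟩ hμ'
    intro s A hA
    show Measure.map (liftMap H φ) μ (cylSet s A) = ∏ g ∈ s, κ' (A g)
    rw [Measure.map_apply hlm (measurableSet_cylSet hA)]
    have hdisj : ∀ c c' : G ⧸ H, c ≠ c' →
        ∀ h h' : H, tv H c * (h : G) ≠ tv H c' * (h' : G) := by
      intro c c' hne h h' heq
      apply hne
      rw [← mk_tv_mul H c h, ← mk_tv_mul H c' h', heq]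
    have hBmeas : ∀ c : G ⧸ H, MeasurableSet
        (⋂ a ∈ s.filter (fun a : G => (a : G ⧸ H) = c),
          (fun z : H → K => φ z (sg H a)) ⁻¹' A a) := fun c =>
      Finset.measurableSet_biInter _ fun a ha =>
        ((measurable_pi_apply (sg H a)).comp hφm) (hA a (Finset.mem_filter.mp ha).1)
    have hpre : liftMap H φ ⁻¹' cylSet s A
        = ⋂ c ∈ s.image (fun g : G => (g : G ⧸ H)),
            (fun (x : G → K) (h : H) => x (tv H c * (h : G))) ⁻¹'
              (⋂ a ∈ s.filter (fun a : G => (a : G ⧸ H) = c),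
                (fun z : H → K => φ z (sg H a)) ⁻¹' A a) := by
      ext x
      simp only [Set.mem_preimage, cylSet, Set.mem_setOf_eq, Set.mem_iInter,
        Finset.mem_image, Finset.mem_filter]
      constructor
      · intro hx c _ a ha
        obtain ⟨has, hac⟩ := ha
        subst hac
        exact hx a has
      · intro hx g hg
        exact hx (g : G ⧸ H) ⟨g, hg, rfl⟩ g ⟨hg, rfl⟩
    have hstep : μ (liftMap H φ ⁻¹' cylSet s A)
        = ∏ c ∈ s.image (fun g : G => (g : G ⧸ H)),
            ν (⋂ a ∈ s.filter (fun a : G => (a : G ⧸ H) = c),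
              (fun z : H → K => φ z (sg H a)) ⁻¹' A a) := by
      rw [hpre]
      exact prodMeas_iInter hμ hν (fun c (h : H) => tv H c * (h : G))
        (tv_mul_injective H) hdisj _ _ (fun c _ => hBmeas c)
    rw [hstep]
    have hcount : ∀ c ∈ s.image (fun g : G => (g : G ⧸ H)),
        ν (⋂ a ∈ s.filter (fun a : G => (a : G ⧸ H) = c),
            (fun z : H → K => φ z (sg H a)) ⁻¹' A a)
          = ∏ a ∈ s.filter (fun a : G => (a : G ⧸ H) = c), κ' (A a) := by
      intro c _
      have hBpre : (⋂ a ∈ s.filter (fun a : G => (a : G ⧸ H) = c),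
            (fun z : H → K => φ z (sg H a)) ⁻¹' A a)
          = φ ⁻¹' {z : H → K' | ∀ a ∈ s.filter (fun a : G => (a : G ⧸ H) = c),
              z (sg H a) ∈ A a} := by
        ext z
        simp only [Set.mem_iInter, Set.mem_preimage, Set.mem_setOf_eq]
      have hmeas2 : MeasurableSet
          {z : H → K' | ∀ a ∈ s.filter (fun a : G => (a : G ⧸ H) = c), z (sg H a) ∈ A a} := by
        have h2 : {z : H → K' | ∀ a ∈ s.filter (fun a : G => (a : G ⧸ H) = c), z (sg H a) ∈ A a}
            = ⋂ a ∈ s.filter (fun a : G => (a : G ⧸ H) = c),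
                (fun z : H → K' => z (sg H a)) ⁻¹' A a := by
          ext z
          simp only [Set.mem_iInter, Set.mem_preimage, Set.mem_setOf_eq]
        rw [h2]
        exact Finset.measurableSet_biInter _ fun a ha =>
          (measurable_pi_apply _) (hA a (Finset.mem_filter.mp ha).1)
      have hsg_inj : Set.InjOn (sg H) ↑(s.filter fun a : G => (a : G ⧸ H) = c) := by
        intro a ha b hb hab
        have ha' := (Finset.mem_filter.mp (Finset.mem_coe.mp ha)).2
        have hb' := (Finset.mem_filter.mp (Finset.mem_coe.mp hb)).2
        calc a = tv H (a : G ⧸ H) * (sg H a : G) := (tv_mul_sg H a).symm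
          _ = tv H (b : G ⧸ H) * (sg H b : G) := by rw [ha', hb', hab]
          _ = b := tv_mul_sg H b
      rw [hBpre, ← Measure.map_apply hφm hmeas2, hφmap]
      exact prodMeas_apply_inj hν' (sg H) _ hsg_inj A
        (fun a ha => hA a (Finset.mem_filter.mp ha).1)
    rw [Finset.prod_congr rfl hcount]
    exact Finset.prod_fiberwise_of_maps_to (fun g hg => Finset.mem_image_of_mem _ hg) _

end Stepin

end StepinLift
/-- **Stepin's theorem.** A countable group containing an Ornstein subgroup is Ornstein. -/
theorem isOrnstein_of_subgroup_isOrnstein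
    (G : Type) [Group G] [Countable G] (H : Subgroup G)
    (hH : IsOrnstein H) : IsOrnstein G := by
  intro K₁ K₂ m₁ m₂ hs₁ hs₂ hc₁ hc₂ κ₁ κ₂ hκ₁ hκ₂ hent μ₁ μ₂ hμ₁ hμ₂
  classical
  haveI := hμ₁.1
  haveI := hμ₂.1
  have hcoe : Function.Injective fun h : H => (h : G) := Subtype.coe_injective
  have hν₁ : IsProductMeasure
      (Measure.map (fun (x : G → K₁) (h : H) => x (h : G)) μ₁) (fun _ => κ₁) :=
    Stepin.isProductMeasure_map_comp hμ₁ hcoe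
  have hν₂ : IsProductMeasure
      (Measure.map (fun (x : G → K₂) (h : H) => x (h : G)) μ₂) (fun _ => κ₂) :=
    Stepin.isProductMeasure_map_comp hμ₂ hcoe
  obtain ⟨φ₀, ψ₀, ⟨Y₁, hφ₀⟩, ⟨Y₂, hψ₀⟩, hae₁, hae₂⟩ :=
    hH K₁ K₂ m₁ m₂ hs₁ hs₂ hc₁ hc₂ κ₁ κ₂ hκ₁ hκ₂ hent _ _ hν₁ hν₂
  refine ⟨Stepin.liftMap H φ₀, Stepin.liftMap H ψ₀,
    ⟨_, Stepin.liftFactor H hμ₁ hμ₂ hν₁ hν₂ hφ₀⟩,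
    ⟨_, Stepin.liftFactor H hμ₂ hμ₁ hν₂ hν₁ hψ₀⟩, ?_, ?_⟩
  · rw [ae_iff]
    have h0 := ae_iff.mp hae₁
    refine measure_mono_null ?_
      (Stepin.null_Rv H hμ₁ hν₁ (Z := {z | ¬ ψ₀ (φ₀ z) = z}) h0)
    intro x hx
    simp only [Set.mem_setOf_eq] at hx ⊢
    by_contra hmem
    push_neg at hmem
    apply hx
    exact Stepin.liftMap_comp H _ _ _ hmem
  · rw [ae_iff]
    have h0 := ae_iff.mp hae₂
    refine measure_mono_null ?_
      (Stepin.null_Rv H hμ₂ hν₂ (Z := {z | ¬ φ₀ (ψ₀ z) = z}) h0)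
    intro y hy
    simp only [Set.mem_setOf_eq] at hy ⊢
    by_contra hmem
    push_neg at hmem
    apply hy
    exact Stepin.liftMap_comp H _ _ _ hmem
end

section
/- Let G be a countable group, H ≤ G a subgroup, σ: G/H → G a section with σ(H) = e, and α(g,c) = σ(c)⁻¹ g σ(g⁻¹c) the associated cocycle. Let (K,κ) be a probability space. Then the map J: K^G → (K^H)^{G/H} defined by J(x)(c)(h) = x(σ(c)h) for x ∈ K^G, c ∈ G/H, h ∈ H, is a measure-conjugacy from the Bernoulli shift (G, K^G, κ^G) to the G-system on ((K^H)^{G/H}, (κ^H)^{G/H}) coinduced from the Bernoulli shift (H, K^H, κ^H). In particular: (i) J(g·x) = g·J(x) for all g ∈ G and x ∈ K^G; (ii) the pushforward of κ^G under J is (κ^H)^{G/H}; (iii) J is a bijection with inverse J⁻¹(y)(g) = y(gH)(α(g,gH)) for y ∈ (K^H)^{G/H} and g ∈ G. -/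
open MeasureTheory ENNReal

/-! ### Auxiliary lemmas -/

/-- finite cylinder sets -/
def cylSets (ι : Type*) (K : ι → Type*) [∀ i, MeasurableSpace (K i)] : Set (Set (∀ i, K i)) :=
  {S | ∃ (s : Finset ι) (A : ∀ i, Set (K i)), (∀ i ∈ s, MeasurableSet (A i)) ∧
    S = {x | ∀ i ∈ s, x i ∈ A i}}

lemma measurableSet_cyl {ι : Type*} {K : ι → Type*} [∀ i, MeasurableSpace (K i)]
    (s : Finset ι) (A : ∀ i, Set (K i)) (hA : ∀ i ∈ s, MeasurableSet (A i)) :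
    MeasurableSet {x : ∀ i, K i | ∀ i ∈ s, x i ∈ A i} := by
  have : {x : ∀ i, K i | ∀ i ∈ s, x i ∈ A i} = ⋂ i ∈ (s : Set ι), (fun x => x i) ⁻¹' A i := by
    ext x; simp
  rw [this]
  exact MeasurableSet.biInter s.countable_toSet
    (fun i hi => (measurable_pi_apply i) (hA i hi))

open scoped Classical in
lemma isPiSystem_cylSets (ι : Type*) (K : ι → Type*) [∀ i, MeasurableSpace (K i)] :
    IsPiSystem (cylSets ι K) := by
  rintro S ⟨s, A, hA, rfl⟩ T ⟨t, B, hB, rfl⟩ -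
  refine ⟨s ∪ t, fun i => (if i ∈ s then A i else Set.univ) ∩ (if i ∈ t then B i else Set.univ),
    ?_, ?_⟩
  · intro i _
    apply MeasurableSet.inter <;> split <;>
      first | exact hA _ ‹_› | exact hB _ ‹_› | exact MeasurableSet.univ
  · ext x
    simp only [Set.mem_inter_iff, Set.mem_setOf_eq, Finset.mem_union]
    constructor
    · rintro ⟨h1, h2⟩ i hi
      constructor <;> split <;> simp_all
    · intro h
      constructor
      · intro i hi; have := (h i (Or.inl hi)).1; simpa [hi] using this
      · intro i hi; have := (h i (Or.inr hi)).2; simpa [hi] using this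

lemma generateFrom_cylSets (ι : Type*) (K : ι → Type*) [∀ i, MeasurableSpace (K i)] :
    (MeasurableSpace.pi : MeasurableSpace (∀ i, K i)) =
      MeasurableSpace.generateFrom (cylSets ι K) := by
  classical
  refine le_antisymm ?_ ?_
  · refine iSup_le fun i => ?_
    rw [MeasurableSpace.comap_le_iff_le_map]
    intro A hA
    refine MeasurableSpace.measurableSet_generateFrom
      ⟨{i}, Function.update (fun j => (Set.univ : Set (K j))) i A, ?_, ?_⟩
    · intro j hj
      rcases Finset.mem_singleton.mp hj with rfl
      simpa using hA
    · ext x; simp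
  · rw [MeasurableSpace.generateFrom_le_iff]
    rintro S ⟨s, A, hA, rfl⟩
    exact measurableSet_cyl s A hA

lemma prob_ext_cylSets {ι : Type*} {K : ι → Type*} [∀ i, MeasurableSpace (K i)]
    (μ ν : Measure (∀ i, K i)) [IsProbabilityMeasure μ] [IsProbabilityMeasure ν]
    (h : ∀ (s : Finset ι) (A : ∀ i, Set (K i)), (∀ i ∈ s, MeasurableSet (A i)) →
      μ {x | ∀ i ∈ s, x i ∈ A i} = ν {x | ∀ i ∈ s, x i ∈ A i}) : μ = ν := by
  refine ext_of_generate_finite _ (generateFrom_cylSets ι K) (isPiSystem_cylSets ι K) ?_ ?_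
  · rintro S ⟨s, A, hA, rfl⟩
    exact h s A hA
  · simp

/-- A cylinder indexed through an injection has the expected product measure. -/
lemma map_reindex {G ι K : Type*} [MeasurableSpace K] {κ : Measure K} {μG : Measure (G → K)}
    (hμG : IsProductMeasure μG (fun _ : G => κ)) (τ : ι → G) (hτ : Function.Injective τ)
    (u : Finset ι) (A : ι → Set K) (hA : ∀ p ∈ u, MeasurableSet (A p)) :
    μG {x | ∀ p ∈ u, x (τ p) ∈ A p} = ∏ p ∈ u, κ (A p) := by
  classical
  set A' : G → Set K := fun g => {k | ∀ p ∈ u, τ p = g → k ∈ A p} with hA'def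
  have hA' : ∀ g, MeasurableSet (A' g) := by
    intro g
    have : A' g = ⋂ p ∈ (u : Set ι), {k | τ p = g → k ∈ A p} := by
      ext k; simp [hA'def]
    rw [this]
    refine MeasurableSet.biInter u.countable_toSet fun p hp => ?_
    by_cases h : τ p = g
    · have : {k | τ p = g → k ∈ A p} = A p := by ext k; simp [h]
      rw [this]; exact hA p hp
    · have : {k | τ p = g → k ∈ A p} = Set.univ := by ext k; simp [h]
      rw [this]; exact MeasurableSet.univ
  have hset : {x : G → K | ∀ p ∈ u, x (τ p) ∈ A p} =
      {x : G → K | ∀ g ∈ u.image τ, x g ∈ A' g} := by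
    ext x
    simp only [Set.mem_setOf_eq, Finset.mem_image, hA'def]
    constructor
    · rintro hx g ⟨p, hp, rfl⟩ q hq hqg
      exact hτ hqg ▸ hx q hq
    · intro hx p hp
      exact hx (τ p) ⟨p, hp, rfl⟩ p hp rfl
  have hval : ∀ p ∈ u, A' (τ p) = A p := by
    intro p hp
    ext k
    simp only [hA'def, Set.mem_setOf_eq]
    constructor
    · intro h; exact h p hp rfl
    · intro h q hq hqp; exact (hτ hqp) ▸ h
  rw [hset, hμG.2 (u.image τ) A' (fun g _ => hA' g),
    Finset.prod_image (fun p hp q hq h => hτ h)]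
  exact Finset.prod_congr rfl fun p hp => by rw [hval p hp]

/-- A doubly-indexed cylinder in an iterated product has the expected product measure. -/
lemma double_cyl {Q Hh K : Type*} [MeasurableSpace K] {κ : Measure K}
    {μH : Measure (Hh → K)} {μQ : Measure (Q → Hh → K)}
    (hμH : IsProductMeasure μH (fun _ : Hh => κ))
    (hμQ : IsProductMeasure μQ (fun _ : Q => μH))
    (u : Finset (Q × Hh)) (A : Q × Hh → Set K) (hA : ∀ p ∈ u, MeasurableSet (A p)) :
    μQ {y | ∀ p ∈ u, y p.1 p.2 ∈ A p} = ∏ p ∈ u, κ (A p) := by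
  classical
  set s := u.image Prod.fst with hs
  set t : Q → Finset Hh := fun c => (u.filter fun p => p.1 = c).image Prod.snd with ht
  set B : Q → Set (Hh → K) := fun c => {z | ∀ h ∈ t c, z h ∈ A (c, h)} with hB
  have hmemt : ∀ c h, h ∈ t c ↔ (c, h) ∈ u := by
    intro c h
    simp only [ht, Finset.mem_image, Finset.mem_filter]
    constructor
    · rintro ⟨p, ⟨hp, rfl⟩, rfl⟩; exact hp
    · intro h'; exact ⟨(c, h), ⟨h', rfl⟩, rfl⟩
  have hset : {y : Q → Hh → K | ∀ p ∈ u, y p.1 p.2 ∈ A p} =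
      {y : Q → Hh → K | ∀ c ∈ s, y c ∈ B c} := by
    ext y
    simp only [Set.mem_setOf_eq, hB]
    constructor
    · intro hy c _ h hh
      exact hy (c, h) ((hmemt c h).mp hh)
    · intro hy p hp
      exact hy p.1 (Finset.mem_image_of_mem _ hp) p.2 ((hmemt p.1 p.2).mpr hp)
  have hBmeas : ∀ c ∈ s, MeasurableSet (B c) := by
    intro c _
    exact measurableSet_cyl (t c) (fun h => A (c, h))
      (fun h hh => hA (c, h) ((hmemt c h).mp hh))
  have hBval : ∀ c ∈ s, μH (B c) = ∏ h ∈ t c, κ (A (c, h)) :=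
    fun c _ => hμH.2 (t c) (fun h => A (c, h)) (fun h hh => hA (c, h) ((hmemt c h).mp hh))
  rw [hset, hμQ.2 s B hBmeas, Finset.prod_congr rfl hBval]
  have inner : ∀ c, ∏ h ∈ t c, κ (A (c, h)) = ∏ p ∈ u.filter (fun p => p.1 = c), κ (A p) := by
    intro c
    rw [ht, Finset.prod_image]
    · refine Finset.prod_congr rfl fun p hp => ?_
      have : p.1 = c := (Finset.mem_filter.mp hp).2
      rw [← this]
    · intro p hp q hq hpq
      have h1 : p.1 = c := (Finset.mem_filter.mp hp).2
      have h2 : q.1 = c := (Finset.mem_filter.mp hq).2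
      exact Prod.ext (h1.trans h2.symm) hpq
  rw [Finset.prod_congr rfl (fun c _ => inner c)]
  exact Finset.prod_fiberwise_of_maps_to (fun p hp => Finset.mem_image_of_mem _ hp) _

/-- The map `J(x)(c)(h) = x(σ(c)h)` is a measure-conjugacy from the Bernoulli shift
`(G, K^G, κ^G)` to the `G`-system on `((K^H)^{G/H}, (κ^H)^{G/H})` coinduced from the
Bernoulli shift `(H, K^H, κ^H)`:  it is equivariant, pushes the product measure `κ^G`
forward to `(κ^H)^{G/H}`, and is a bijection with the explicit measurable inverse
`J⁻¹(y)(g) = y(gH)(α(g, gH))`. -/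
theorem bernoulli_conjugate_to_coinduced
    (G : Type) [Group G] [Countable G] (H : Subgroup G)
    (σ : G ⧸ H → G) (hσ : ∀ c : G ⧸ H, (QuotientGroup.mk (σ c) : G ⧸ H) = c)
    (hσe : σ (QuotientGroup.mk (1 : G)) = 1)
    (hα : ∀ (g : G) (c : G ⧸ H), (σ c)⁻¹ * g * σ (g⁻¹ • c) ∈ H)
    (K : Type) [MeasurableSpace K] (κ : Measure K) [IsProbabilityMeasure κ]
    (μG : Measure (G → K)) (hμG : IsProductMeasure μG (fun _ => κ))
    (μH : Measure (H → K)) (hμH : IsProductMeasure μH (fun _ => κ))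
    (μQ : Measure ((G ⧸ H) → H → K)) (hμQ : IsProductMeasure μQ (fun _ => μH)) :
    -- the G-action coinduced from the Bernoulli H-action on (K^H, κ^H):
    let S : G → ((G ⧸ H) → H → K) → (G ⧸ H) → H → K := fun g y c =>
      bshift H K (⟨(σ c)⁻¹ * g * σ (g⁻¹ • c), hα g c⟩ : H) (y (g⁻¹ • c));
    let J : (G → K) → (G ⧸ H) → H → K := fun x c h => x (σ c * (h : G));
    let Jinv : ((G ⧸ H) → H → K) → G → K := fun y g =>
      y (QuotientGroup.mk g)
        ⟨(σ (QuotientGroup.mk g))⁻¹ * g * σ (g⁻¹ • (QuotientGroup.mk g : G ⧸ H)),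
          hα g (QuotientGroup.mk g)⟩;
    Measurable J ∧
    -- (i) equivariance
    (∀ (g : G) (x : G → K), J (bshift G K g x) = S g (J x)) ∧
    -- (ii) J pushes κ^G forward to (κ^H)^{G/H}
    Measure.map J μG = μQ ∧
    -- (iii) J is a bijection with the stated measurable inverse
    Function.LeftInverse Jinv J ∧ Function.RightInverse Jinv J ∧ Measurable Jinv := by
  intro S J Jinv
  have hJmeas : Measurable J :=
    measurable_pi_lambda _ fun c => measurable_pi_lambda _ fun h => measurable_pi_apply _
  have hJinvmeas : Measurable Jinv :=
    measurable_pi_lambda _ fun g =>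
      (measurable_pi_apply _).comp (measurable_pi_apply _)
  -- equivariance
  have hequiv : ∀ (g : G) (x : G → K), J (bshift G K g x) = S g (J x) := by
    intro g x
    funext c h
    show x (g⁻¹ * (σ c * (h : G))) =
      x (σ (g⁻¹ • c) * (((⟨(σ c)⁻¹ * g * σ (g⁻¹ • c), hα g c⟩ : H)⁻¹ * h : H) : G))
    congr 1
    push_cast
    group
  -- left inverse
  have hleft : Function.LeftInverse Jinv J := by
    intro x
    funext g
    show x (σ (QuotientGroup.mk g) *
      ((σ (QuotientGroup.mk g))⁻¹ * g * σ (g⁻¹ • (QuotientGroup.mk g : G ⧸ H)))) = x g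
    have h1 : (g⁻¹ • (QuotientGroup.mk g : G ⧸ H)) = QuotientGroup.mk (1 : G) := by
      rw [MulAction.Quotient.smul_mk, smul_eq_mul, inv_mul_cancel]
    rw [h1, hσe]
    congr 1
    group
  -- right inverse
  have hright : Function.RightInverse Jinv J := by
    intro y
    funext c h
    have key : ∀ (c' : G ⧸ H) (a : H), c' = c → (a : G) = (h : G) → y c' a = y c h := by
      rintro c' a rfl ha
      exact congrArg (y c') (Subtype.ext ha)
    refine key _ _ ?_ ?_
    · rw [QuotientGroup.mk_mul_of_mem _ h.2, hσ]
    · show (σ (QuotientGroup.mk (σ c * (h : G))))⁻¹ * (σ c * (h : G)) *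
        σ ((σ c * (h : G))⁻¹ • (QuotientGroup.mk (σ c * (h : G)) : G ⧸ H)) = (h : G)
      have h1 : (QuotientGroup.mk (σ c * (h : G)) : G ⧸ H) = c := by
        rw [QuotientGroup.mk_mul_of_mem _ h.2, hσ]
      rw [h1]
      have h2 : ((σ c * (h : G))⁻¹ • c) = QuotientGroup.mk (1 : G) := by
        have h3 : ((σ c * (h : G))⁻¹ • (QuotientGroup.mk (σ c) : G ⧸ H)) =
            QuotientGroup.mk (1 : G) := by
          rw [MulAction.Quotient.smul_mk, smul_eq_mul]
          apply (QuotientGroup.eq).mpr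
          have h4 : ((σ c * (h : G))⁻¹ * σ c)⁻¹ * 1 = (h : G) := by group
          rw [h4]; exact h.2
        rwa [hσ c] at h3
      rw [h2, hσe]
      group
  -- the measure statement
  haveI : IsProbabilityMeasure μG := hμG.1
  haveI : IsProbabilityMeasure μQ := hμQ.1
  have hmap : Measure.map J μG = μQ := by
    set e : ((G ⧸ H) → H → K) → ((G ⧸ H) × H → K) := fun y p => y p.1 p.2 with he_def
    set e' : ((G ⧸ H) × H → K) → ((G ⧸ H) → H → K) := fun z c h => z (c, h) with he'_def
    have he : Measurable e :=
      measurable_pi_lambda _ fun p => (measurable_pi_apply p.2).comp (measurable_pi_apply p.1)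
    have he' : Measurable e' :=
      measurable_pi_lambda _ fun c => measurable_pi_lambda _ fun h => measurable_pi_apply _
    have τinj : Function.Injective (fun p : (G ⧸ H) × H => σ p.1 * (p.2 : G)) := by
      rintro ⟨c₁, h₁⟩ ⟨c₂, h₂⟩ hpq
      simp only at hpq
      have hc : c₁ = c₂ := by
        have := congrArg (QuotientGroup.mk (s := H)) hpq
        rwa [QuotientGroup.mk_mul_of_mem _ h₁.2, QuotientGroup.mk_mul_of_mem _ h₂.2,
          hσ, hσ] at this
      subst hc
      have : (h₁ : G) = (h₂ : G) := mul_left_cancel hpq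
      exact Prod.ext rfl (Subtype.ext this)
    have key : Measure.map e (Measure.map J μG) = Measure.map e μQ := by
      rw [Measure.map_map he hJmeas]
      haveI : IsProbabilityMeasure (Measure.map (e ∘ J) μG) :=
        Measure.isProbabilityMeasure_map (he.comp hJmeas).aemeasurable
      haveI : IsProbabilityMeasure (Measure.map e μQ) :=
        Measure.isProbabilityMeasure_map he.aemeasurable
      refine prob_ext_cylSets _ _ fun u A hA => ?_
      rw [Measure.map_apply (he.comp hJmeas) (measurableSet_cyl u A hA),
        Measure.map_apply he (measurableSet_cyl u A hA)]
      have h1 : (e ∘ J) ⁻¹' {z | ∀ p ∈ u, z p ∈ A p} =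
          {x : G → K | ∀ p ∈ u, x (σ p.1 * (p.2 : G)) ∈ A p} := rfl
      have h2 : e ⁻¹' {z | ∀ p ∈ u, z p ∈ A p} =
          {y : (G ⧸ H) → H → K | ∀ p ∈ u, y p.1 p.2 ∈ A p} := rfl
      rw [h1, h2, map_reindex hμG _ τinj u A hA, double_cyl hμH hμQ u A hA]
    have hinv : ∀ ν : Measure ((G ⧸ H) → H → K), Measure.map e' (Measure.map e ν) = ν := by
      intro ν
      rw [Measure.map_map he' he]
      have : e' ∘ e = id := rfl
      rw [this, Measure.map_id]
    calc Measure.map J μG = Measure.map e' (Measure.map e (Measure.map J μG)) :=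
          (hinv _).symm
      _ = Measure.map e' (Measure.map e μQ) := by rw [key]
      _ = μQ := hinv μQ
  exact ⟨hJmeas, hequiv, hmap, hleft, hright, hJinvmeas⟩
end

section
/- (Ornstein–Weiss.) Let 𝔽 = ⟨a,b⟩ be the free group of rank 2. Identify U₂ with the group ℤ/2ℤ and U₄ with ℤ/2ℤ × ℤ/2ℤ, and let u₂ and u₄ be the uniform probability measures on these sets. Define φ: U₂^𝔽 → U₄^𝔽 by φ(x)(g) = (x(g) + x(ga), x(g) + x(gb)) for x ∈ U₂^𝔽 and g ∈ 𝔽. Then φ is a factor map from the Bernoulli shift (𝔽, U₂^𝔽, u₂^𝔽) onto the Bernoulli shift (𝔽, U₄^𝔽, u₄^𝔽): φ is 𝔽-equivariant for the shift actions and the pushforward of u₂^𝔽 under φ equals u₄^𝔽. -/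
open MeasureTheory ENNReal

/-- The free group `𝔽 = ⟨a,b⟩` of rank 2. -/
abbrev F2 : Type := FreeGroup (Fin 2)

/-- The first free generator `a` of `𝔽`. -/
def fa : F2 := FreeGroup.of 0

/-- The second free generator `b` of `𝔽`. -/
def fb : F2 := FreeGroup.of 1

/-- The Ornstein–Weiss map `φ(x)(g) = (x(g) + x(ga), x(g) + x(gb))`. -/
def owMap (x : F2 → ZMod 2) : F2 → ZMod 2 × ZMod 2 :=
  fun g => (x g + x (g * fa), x g + x (g * fb))

/-- The uniform probability measure `u₂` on `ℤ/2ℤ`. -/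
noncomputable def u2 : Measure (ZMod 2) := (PMF.uniformOfFintype (ZMod 2)).toMeasure

/-- The uniform probability measure `u₄` on `ℤ/2ℤ × ℤ/2ℤ`. -/
noncomputable def u4 : Measure (ZMod 2 × ZMod 2) :=
  (PMF.uniformOfFintype (ZMod 2 × ZMod 2)).toMeasure


namespace OW
open FreeGroup

variable {α : Type*} [DecidableEq α]

lemma tail_reduced {a : α × Bool} {t : List (α × Bool)} (h : reduce (a :: t) = a :: t) :
    reduce t = t := by
  rw [reduce.cons] at h
  rcases ht : reduce t with _ | ⟨y, ys⟩
  · rw [ht] at h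
    change [a] = a :: t at h
    injection h
  · rw [ht] at h
    by_cases hc : a.1 = y.1 ∧ a.2 = !y.2
    · simp only [hc, if_true, and_self] at h
      subst h
      have := FreeGroup.Red.length_le (reduce.red (L := t))
      rw [ht] at this
      simp at this
    · simp only [hc, if_false] at h
      injection h

lemma not_cancel_of_reduced {a y : α × Bool} {ys : List (α × Bool)}
    (h : reduce (a :: y :: ys) = a :: y :: ys) : ¬(a.1 = y.1 ∧ a.2 = !y.2) := by
  intro hc
  have ht : reduce (y :: ys) = y :: ys := tail_reduced h
  rw [reduce.cons, ht] at h
  simp only [hc, and_self, if_true] at h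
  have : ys.length = (a :: y :: ys).length := by rw [← h]
  simp at this; omega

lemma reduce_append_singleton {w : List (α × Bool)} {x : α × Bool}
    (hw : reduce w = w)
    (hlast : ∀ y ∈ w.getLast?, ¬(y.1 = x.1 ∧ y.2 = !x.2)) :
    reduce (w ++ [x]) = w ++ [x] := by
  induction w with
  | nil => simp [reduce_singleton]
  | cons a t ih =>
    rcases t with _ | ⟨h2, t2⟩
    · have := hlast a (by simp)
      simp only [List.cons_append, List.nil_append, reduce.cons, reduce_singleton]
      simp [this]
    · have htail : reduce ((h2 :: t2) ++ [x]) = (h2 :: t2) ++ [x] := by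
        apply ih (tail_reduced hw)
        intro y hy; apply hlast; rw [List.getLast?_cons_cons]; exact hy
      have hnc := not_cancel_of_reduced hw
      rw [List.cons_append, reduce.cons, htail]
      simp only [List.cons_append]
      simp [hnc]



-- letter infrastructure
def lett (i : Fin 2) (b : Bool) : F2 := FreeGroup.mk [(i, b)]

lemma fa_eq : fa = lett 0 true := rfl
lemma fb_eq : fb = lett 1 true := rfl

lemma lett_inv (i : Fin 2) (b : Bool) : (lett i b)⁻¹ = lett i (!b) := by
  rw [lett, FreeGroup.inv_mk]
  rfl

/-- The key word computation. -/
lemma toWord_mul_lett {g : F2} {i : Fin 2} {b : Bool}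
    (h : ∀ y ∈ g.toWord.getLast?, y ≠ (i, !b)) :
    (g * lett i b).toWord = g.toWord ++ [(i, b)] := by
  conv_lhs => rw [← FreeGroup.mk_toWord (x := g)]
  rw [lett, FreeGroup.mul_mk, FreeGroup.toWord_mk]
  apply reduce_append_singleton (FreeGroup.reduce_toWord g)
  intro y hy hc
  exact h y hy (by cases y; cases hc.1; cases hc.2; rfl)

lemma norm_mul_lett {g : F2} {i : Fin 2} {b : Bool}
    (h : ∀ y ∈ g.toWord.getLast?, y ≠ (i, !b)) :
    FreeGroup.norm (g * lett i b) = FreeGroup.norm g + 1 := by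
  unfold FreeGroup.norm
  rw [toWord_mul_lett h]
  simp

lemma getLast_mul_lett {g : F2} {i : Fin 2} {b : Bool}
    (h : ∀ y ∈ g.toWord.getLast?, y ≠ (i, !b)) :
    (g * lett i b).toWord.getLast? = some (i, b) := by
  rw [toWord_mul_lett h]
  simp
section CL
open FreeGroup

/-- `T(s) = s ∪ s·a ∪ s·b`, the set of coordinates involved in the constraints from `s`. -/
def Tset (s : Finset F2) : Finset F2 := s ∪ s.image (· * fa) ∪ s.image (· * fb)

lemma mem_Tset {s : Finset F2} {u : F2} :
    u ∈ Tset s ↔ u ∈ s ∨ (∃ h ∈ s, h * fa = u) ∨ ∃ h ∈ s, h * fb = u := by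
  constructor
  · intro h
    rcases Finset.mem_union.mp h with h' | h'
    · rcases Finset.mem_union.mp h' with h2 | h2
      · exact Or.inl h2
      · obtain ⟨a, ha, rfl⟩ := Finset.mem_image.mp h2
        exact Or.inr (Or.inl ⟨a, ha, rfl⟩)
    · obtain ⟨a, ha, rfl⟩ := Finset.mem_image.mp h'
      exact Or.inr (Or.inr ⟨a, ha, rfl⟩)
  · rintro (h | ⟨a, ha, rfl⟩ | ⟨a, ha, rfl⟩)
    · exact Finset.mem_union_left _ (Finset.mem_union_left _ h)
    · exact Finset.mem_union_left _ (Finset.mem_union_right _ (Finset.mem_image_of_mem _ ha))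
    · exact Finset.mem_union_right _ (Finset.mem_image_of_mem _ ha)

lemma lastNe_of_eq {g : F2} {ℓ p : Fin 2 × Bool} (hlast : g.toWord.getLast? = some ℓ)
    (h : ℓ ≠ p) : ∀ y ∈ g.toWord.getLast?, y ≠ p := by
  intro y hy
  rw [hlast] at hy
  cases hy
  exact h

lemma fa_lett : fa = lett 0 true := rfl
lemma fb_lett : fb = lett 1 true := rfl

lemma step2 {s' : Finset F2} {g : F2} (hN : ∀ h ∈ s', norm h ≤ norm g) (hg : g ∉ s')
    {ℓ : Fin 2 × Bool} (hlast : g.toWord.getLast? = some ℓ) {j : Fin 2}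
    (hcond : ℓ ≠ (j, false)) (k : Fin 2) :
    ∀ h ∈ s', h * lett k true ≠ g * lett j true := by
  intro h hh heq
  by_cases hkj : k = j
  · subst hkj
    have : h = g := mul_right_cancel heq
    exact hg (this ▸ hh)
  · have hform : h = g * lett j true * lett k false := by
      have := eq_mul_inv_of_mul_eq heq
      rwa [lett_inv] at this
    have n1 : FreeGroup.norm (g * lett j true) = FreeGroup.norm g + 1 :=
      norm_mul_lett (lastNe_of_eq hlast (by simpa using hcond))
    have n2 : FreeGroup.norm (g * lett j true * lett k false) = FreeGroup.norm g + 2 := by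
      rw [norm_mul_lett, n1]
      apply lastNe_of_eq (getLast_mul_lett (lastNe_of_eq hlast (by simpa using hcond)))
      simp only [Ne, Prod.ext_iff, not_and]
      exact fun h => absurd h.symm hkj
    have := hN h hh
    rw [hform, n2] at this
    omega

lemma L2 {s' : Finset F2} {g : F2} (hN : ∀ h ∈ s', norm h ≤ norm g) (hg : g ∉ s')
    {ℓ : Fin 2 × Bool} (hlast : g.toWord.getLast? = some ℓ) {j : Fin 2}
    (hcond : ℓ ≠ (j, false)) : g * lett j true ∉ Tset s' := by
  intro hmem
  rw [mem_Tset] at hmem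
  rcases hmem with hmem | ⟨h, hh, heq⟩ | ⟨h, hh, heq⟩
  · have hn : FreeGroup.norm (g * lett j true) = FreeGroup.norm g + 1 :=
      norm_mul_lett (lastNe_of_eq hlast (by simpa using hcond))
    have := hN _ hmem
    omega
  · exact step2 hN hg hlast hcond 0 h hh (by rwa [← fa_lett])
  · exact step2 hN hg hlast hcond 1 h hh (by rwa [← fb_lett])

lemma LF1 {s' : Finset F2} {g : F2} (hN : ∀ h ∈ s', norm h ≤ norm g) (hg : g ∉ s')
    {i : Fin 2} (hlast : g.toWord.getLast? = some (i, false)) : g ∉ Tset s' := by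
  intro hmem
  rw [mem_Tset] at hmem
  have key : ∀ k : Fin 2, ∀ h ∈ s', h * lett k true ≠ g := by
    intro k h hh heq
    have hform : h = g * lett k false := by
      have := eq_mul_inv_of_mul_eq heq
      rwa [lett_inv] at this
    have n1 : FreeGroup.norm (g * lett k false) = FreeGroup.norm g + 1 :=
      norm_mul_lett (lastNe_of_eq hlast (by simp [Ne, Prod.ext_iff]))
    have := hN h hh
    rw [hform, n1] at this
    omega
  rcases hmem with hmem | ⟨h, hh, heq⟩ | ⟨h, hh, heq⟩
  · exact hg hmem
  · exact key 0 h hh (by rwa [← fa_lett])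
  · exact key 1 h hh (by rwa [← fb_lett])

/-- The key combinatorial lemma: in a finite nonempty `s ⊆ 𝔽₂` there is `g ∈ s` such that at
most one of `g, ga, gb` appears among the coordinates used by the other constraints. -/
lemma CL {s : Finset F2} (hs : s.Nonempty) :
    ∃ g ∈ s, ∃ z : F2,
      ∀ u ∈ Tset (s.erase g), (u = g ∨ u = g * fa ∨ u = g * fb) → u = z := by
  obtain ⟨g, hg, hmax⟩ := Finset.exists_max_image s FreeGroup.norm hs
  refine ⟨g, hg, ?_⟩
  have hN : ∀ h ∈ s.erase g, FreeGroup.norm h ≤ FreeGroup.norm g := fun h hh =>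
    hmax h (Finset.mem_of_mem_erase hh)
  have hgs : g ∉ s.erase g := Finset.notMem_erase g s
  rcases hlast : g.toWord.getLast? with _ | ⟨i, bb⟩
  · -- g = 1, so s = {g} and there is nothing to check
    refine ⟨g, fun u hu _ => ?_⟩
    exfalso
    have hg1 : g = 1 := by
      rw [← FreeGroup.toWord_eq_nil_iff, ← List.getLast?_eq_none_iff]
      exact hlast
    have : s.erase g = ∅ := by
      apply Finset.eq_empty_of_forall_notMem
      intro h hh
      have h1 : h = 1 := by
        rw [← FreeGroup.norm_eq_zero]
        have := hN h hh
        rw [hg1] at this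
        simpa using this
      exact (Finset.ne_of_mem_erase hh) (h1.trans hg1.symm)
    rw [this] at hu
    simp [Tset] at hu
  · cases bb
    · -- g ends with a letter `a⁻¹` or `b⁻¹`; then `g` and `g·(other letter)` are fresh
      refine ⟨g * lett i true, fun u hu hor => ?_⟩
      rcases hor with rfl | rfl | rfl
      · exact absurd hu (LF1 hN hgs hlast)
      · by_cases h0 : i = 0
        · rw [fa_lett, h0]
        · exfalso
          rw [fa_lett] at hu
          exact L2 hN hgs hlast (by simp [Prod.ext_iff, h0]) hu
      · by_cases h1 : i = 1
        · rw [fb_lett, h1]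
        · exfalso
          rw [fb_lett] at hu
          exact L2 hN hgs hlast (by simp [Prod.ext_iff, h1]) hu
    · -- g ends with `a` or `b`; then `g·a` and `g·b` are both fresh
      refine ⟨g, fun u hu hor => ?_⟩
      rcases hor with rfl | rfl | rfl
      · rfl
      · exact absurd (by rwa [fa_lett] at hu) (L2 hN hgs hlast (by simp [Ne, Prod.ext_iff]))
      · exact absurd (by rwa [fb_lett] at hu) (L2 hN hgs hlast (by simp [Ne, Prod.ext_iff]))

end CL

section Sol
open scoped Classical

lemma z2add (a b : ZMod 2) : a + b + b = a := by revert a b; decide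

/-- The constraints coming from `s`. -/
def Econ (s : Finset F2) (c : F2 → ZMod 2 × ZMod 2) (x : F2 → ZMod 2) : Prop :=
  ∀ g ∈ s, x (g * fa) = x g + (c g).1 ∧ x (g * fb) = x g + (c g).2

/-- Solutions to the constraints supported on `T(s)`. -/
def Sol (s : Finset F2) (c : F2 → ZMod 2 × ZMod 2) : Set (F2 → ZMod 2) :=
  {ω | (∀ i, i ∉ Tset s → ω i = 0) ∧ Econ s c ω}

lemma self_mem_Tset {s : Finset F2} {h : F2} (hh : h ∈ s) : h ∈ Tset s :=
  mem_Tset.mpr (Or.inl hh)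

lemma mulfa_mem_Tset {s : Finset F2} {h : F2} (hh : h ∈ s) : h * fa ∈ Tset s :=
  mem_Tset.mpr (Or.inr (Or.inl ⟨h, hh, rfl⟩))

lemma mulfb_mem_Tset {s : Finset F2} {h : F2} (hh : h ∈ s) : h * fb ∈ Tset s :=
  mem_Tset.mpr (Or.inr (Or.inr ⟨h, hh, rfl⟩))

lemma econ_congr {s : Finset F2} {c : F2 → ZMod 2 × ZMod 2} {ω₁ ω₂ : F2 → ZMod 2}
    (hag : ∀ i ∈ Tset s, ω₁ i = ω₂ i) (h : Econ s c ω₁) : Econ s c ω₂ := by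
  intro h' hh'
  rw [← hag _ (self_mem_Tset hh'), ← hag _ (mulfa_mem_Tset hh'), ← hag _ (mulfb_mem_Tset hh')]
  exact h h' hh'

lemma sol_finite (s : Finset F2) (c : F2 → ZMod 2 × ZMod 2) : (Sol s c).Finite := by
  rw [← Set.finite_coe_iff]
  have : Function.Injective (fun (ω : Sol s c) (i : ↥(Tset s)) => (ω : F2 → ZMod 2) i) := by
    intro ω₁ ω₂ h
    apply Subtype.ext
    funext i
    by_cases hi : i ∈ Tset s
    · exact congrFun h ⟨i, hi⟩
    · rw [ω₁.2.1 i hi, ω₂.2.1 i hi]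
  exact Finite.of_injective _ this

lemma fa_ne_one : fa ≠ 1 := FreeGroup.of_ne_one 0
lemma fb_ne_one : fb ≠ 1 := FreeGroup.of_ne_one 1
lemma fa_ne_fb : fa ≠ fb := fun h => absurd (FreeGroup.of_injective h) (by decide)

lemma g_ne_ga {g : F2} : g ≠ g * fa := fun h => fa_ne_one (left_eq_mul.mp h)
lemma g_ne_gb {g : F2} : g ≠ g * fb := fun h => fb_ne_one (left_eq_mul.mp h)
lemma ga_ne_gb {g : F2} : g * fa ≠ g * fb := fun h => fa_ne_fb (mul_left_cancel h)

end Sol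

section Count
open scoped Classical

lemma Tset_insert (g : F2) (s' : Finset F2) :
    Tset (insert g s') = insert g (insert (g * fa) (insert (g * fb) (Tset s'))) := by
  ext u
  simp only [mem_Tset, Finset.mem_insert]
  constructor
  · rintro ((rfl | h) | ⟨h, (rfl | hh), rfl⟩ | ⟨h, (rfl | hh), rfl⟩)
    · tauto
    · tauto
    · tauto
    · exact Or.inr (Or.inr (Or.inr (Or.inr (Or.inl ⟨h, hh, rfl⟩))))
    · tauto
    · exact Or.inr (Or.inr (Or.inr (Or.inr (Or.inr ⟨h, hh, rfl⟩))))
  · rintro (rfl | rfl | rfl | (h | ⟨a, ha, rfl⟩ | ⟨a, ha, rfl⟩))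
    · tauto
    · exact Or.inr (Or.inl ⟨g, Or.inl rfl, rfl⟩)
    · exact Or.inr (Or.inr ⟨g, Or.inl rfl, rfl⟩)
    · tauto
    · exact Or.inr (Or.inl ⟨a, Or.inr ha, rfl⟩)
    · exact Or.inr (Or.inr ⟨a, Or.inr ha, rfl⟩)

lemma Tset_empty : Tset (∅ : Finset F2) = ∅ := by
  ext u; simp [mem_Tset]

lemma sol_empty (c : F2 → ZMod 2 × ZMod 2) :
    Sol ∅ c = {(fun _ => 0 : F2 → ZMod 2)} := by
  ext ω
  simp only [Sol, Econ, Set.mem_setOf_eq, Set.mem_singleton_iff, Finset.notMem_empty,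
    false_implies, imp_false, and_true, Tset_empty, Finset.notMem_empty, not_false_iff,
    forall_true_left, implies_true]
  constructor
  · intro h; funext i; exact h i
  · intro h i; rw [h]

lemma sol_count (c : F2 → ZMod 2 × ZMod 2) (s : Finset F2) :
    (Sol s c).ncard * 2 ^ (2 * s.card) = 2 ^ (Tset s).card := by
  induction s using Finset.strongInduction with
  | _ s ih =>
  rcases Finset.eq_empty_or_nonempty s with rfl | hs
  · rw [sol_empty, Set.ncard_singleton, Tset_empty]
    simp
  obtain ⟨g, hg, z, hz⟩ := CL hs
  set s' := s.erase g with hs'def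
  have IH := ih s' (Finset.erase_ssubset hg)
  have hgs' : g ∉ s' := Finset.notMem_erase g s
  have hins : insert g s' = s := Finset.insert_erase hg
  have hcard : s.card = s'.card + 1 := by
    rw [← hins, Finset.card_insert_of_notMem hgs']
  have hT : Tset s = insert g (insert (g * fa) (insert (g * fb) (Tset s'))) := by
    rw [← hins, Tset_insert]
  set c1 := (c g).1
  set c2 := (c g).2
  set Φ : ZMod 2 → (F2 → ZMod 2) → (F2 → ZMod 2) := fun v ω' h =>
    if h = g then v else if h = g * fa then v + c1 else if h = g * fb then v + c2 else ω' h
    with hΦ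
  have e1 : ∀ v ω', Φ v ω' g = v := by intro v ω'; simp [hΦ]
  have e2 : ∀ v ω', Φ v ω' (g * fa) = v + c1 := by
    intro v ω'; simp [hΦ, Ne.symm (g_ne_ga (g := g))]
  have e3 : ∀ v ω', Φ v ω' (g * fb) = v + c2 := by
    intro v ω'; simp [hΦ, Ne.symm (g_ne_gb (g := g)), Ne.symm (ga_ne_gb (g := g))]
  have e4 : ∀ v ω' u, u ≠ g → u ≠ g * fa → u ≠ g * fb → Φ v ω' u = ω' u := by
    intro v ω' u h1 h2 h3; simp [hΦ, h1, h2, h3]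
  have notmemT : ∀ i, i ∉ Tset s → i ≠ g ∧ i ≠ g * fa ∧ i ≠ g * fb ∧ i ∉ Tset s' := by
    intro i hi
    rw [hT] at hi
    simp only [Finset.mem_insert, not_or] at hi
    exact ⟨hi.1, hi.2.1, hi.2.2.1, hi.2.2.2⟩
  have memT : ∀ i, i ≠ g → i ≠ g * fa → i ≠ g * fb → i ∉ Tset s' → i ∉ Tset s := by
    intro i h1 h2 h3 h4
    rw [hT]
    simp only [Finset.mem_insert, not_or]
    exact ⟨h1, h2, h3, h4⟩
  have econ_of : ∀ ω, Econ s c ω → Econ s' c ω := by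
    intro ω hω h hh
    exact hω h (Finset.mem_of_mem_erase hh)
  have mem1 : ∀ v ω', ω' ∈ Sol s' c → (∀ u ∈ Tset s', Φ v ω' u = ω' u) → Φ v ω' ∈ Sol s c := by
    rintro v ω' ⟨hsupp, hecon⟩ hag
    constructor
    · intro i hi
      obtain ⟨h1, h2, h3, h4⟩ := notmemT i hi
      rw [e4 _ _ _ h1 h2 h3]
      exact hsupp i h4
    · intro h hh
      rw [← hins, Finset.mem_insert] at hh
      rcases hh with rfl | hh'
      · exact ⟨by rw [e2, e1], by rw [e3, e1]⟩
      · exact econ_congr (fun i hi => (hag i hi).symm) hecon h hh'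
  by_cases hB : z ∈ Tset s' ∧ (z = g ∨ z = g * fa ∨ z = g * fb)
  · -- Case B: exactly one of g, ga, gb is an old coordinate, namely z
    obtain ⟨hzT, hztri⟩ := hB
    have hfresh : ∀ u, (u = g ∨ u = g * fa ∨ u = g * fb) → u ≠ z → u ∉ Tset s' :=
      fun u htri hne hu => hne (hz u hu htri)
    set vg : (F2 → ZMod 2) → ZMod 2 := fun ω' =>
      if z = g then ω' z else if z = g * fa then ω' z + c1 else ω' z + c2 with hvg
    have hzg : z = g * fa → z ≠ g := by rintro rfl; exact Ne.symm g_ne_ga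
    have hzg2 : z = g * fb → z ≠ g := by rintro rfl; exact Ne.symm g_ne_gb
    have hzg3 : z = g * fb → z ≠ g * fa := by rintro rfl; exact Ne.symm ga_ne_gb
    -- value of Φ (vg ω') ω' at z is ω' z
    have consist : ∀ ω', Φ (vg ω') ω' z = ω' z := by
      intro ω'
      rcases hztri with h' | h' | h'
      · simp only [hvg]; rw [if_pos h', h', e1]
      · simp only [hvg]; rw [if_neg (hzg h'), if_pos h', h', e2, z2add]
      · simp only [hvg]; rw [if_neg (hzg2 h'), if_neg (hzg3 h'), h', e3, z2add]
    have hagB : ∀ ω', ∀ u ∈ Tset s', Φ (vg ω') ω' u = ω' u := by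
      intro ω' u hu
      by_cases htri : u = g ∨ u = g * fa ∨ u = g * fb
      · rw [hz u hu htri]; exact consist ω'
      · push_neg at htri
        exact e4 _ _ _ htri.1 htri.2.1 htri.2.2
    set zeroB : (F2 → ZMod 2) → (F2 → ZMod 2) := fun ω h =>
      if (h = g ∨ h = g * fa ∨ h = g * fb) ∧ h ≠ z then 0 else ω h with hzeroB
    have zeroB_eq : ∀ ω u, ¬((u = g ∨ u = g * fa ∨ u = g * fb) ∧ u ≠ z) → zeroB ω u = ω u := by
      intro ω u h; simp only [hzeroB, if_neg h]
    have memB : ∀ ω, ω ∈ Sol s c → zeroB ω ∈ Sol s' c := by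
      rintro ω ⟨hsupp, hecon⟩
      constructor
      · intro i hi
        by_cases hc : (i = g ∨ i = g * fa ∨ i = g * fb) ∧ i ≠ z
        · simp only [hzeroB, if_pos hc]
        · rw [zeroB_eq _ _ hc]
          push_neg at hc
          by_cases htri : i = g ∨ i = g * fa ∨ i = g * fb
          · exact absurd (hc htri ▸ hzT) hi
          · push_neg at htri
            exact hsupp i (memT i htri.1 htri.2.1 htri.2.2 hi)
      · refine econ_congr (ω₁ := ω) ?_ (econ_of ω hecon)
        intro i hi
        by_cases htri : i = g ∨ i = g * fa ∨ i = g * fb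
        · rw [zeroB_eq _ _ (by simp [hz i hi htri])]
        · rw [zeroB_eq _ _ (by tauto)]
    have rt1 : ∀ ω, ω ∈ Sol s c → Φ (vg (zeroB ω)) (zeroB ω) = ω := by
      rintro ω hω
      obtain ⟨hsupp, hecon⟩ := hω
      have hzz : zeroB ω z = ω z := zeroB_eq _ _ (by simp)
      have hvgω : vg (zeroB ω) = ω g := by
        rcases hztri with h' | h' | h'
        · simp only [hvg]; rw [if_pos h', hzz, h']
        · simp only [hvg]; rw [if_neg (hzg h'), if_pos h', hzz, h', (hecon g hg).1, z2add]
        · simp only [hvg]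
          rw [if_neg (hzg2 h'), if_neg (hzg3 h'), hzz, h', (hecon g hg).2, z2add]
      funext u
      by_cases h1 : u = g
      · rw [h1, e1, hvgω]
      · by_cases h2 : u = g * fa
        · rw [h2, e2, hvgω, ((hecon g hg).1).symm]
        · by_cases h3 : u = g * fb
          · rw [h3, e3, hvgω, ((hecon g hg).2).symm]
          · rw [e4 _ _ _ h1 h2 h3, zeroB_eq _ _ (by tauto)]
    have rt2 : ∀ ω', ω' ∈ Sol s' c → zeroB (Φ (vg ω') ω') = ω' := by
      rintro ω' hω'
      funext u
      by_cases hc : (u = g ∨ u = g * fa ∨ u = g * fb) ∧ u ≠ z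
      · simp only [hzeroB, if_pos hc]
        exact (hω'.1 u (hfresh u hc.1 hc.2)).symm
      · rw [zeroB_eq _ _ hc]
        push_neg at hc
        by_cases htri : u = g ∨ u = g * fa ∨ u = g * fb
        · rw [hc htri]
          exact consist ω'
        · push_neg at htri
          exact e4 _ _ _ htri.1 htri.2.1 htri.2.2
    have himg : Sol s c = (fun ω' => Φ (vg ω') ω') '' (Sol s' c) := by
      apply Set.eq_of_subset_of_subset
      · intro ω hω
        exact ⟨zeroB ω, memB ω hω, rt1 ω hω⟩
      · rintro ω ⟨ω', hω', rfl⟩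
        exact mem1 _ _ hω' (hagB ω')
    have hinj : Set.InjOn (fun ω' => Φ (vg ω') ω') (Sol s' c) := by
      intro ω₁ h₁ ω₂ h₂ h
      rw [← rt2 ω₁ h₁, ← rt2 ω₂ h₂]
      simp only at h
      rw [h]
    have hn : (Sol s c).ncard = (Sol s' c).ncard := by
      rw [himg, Set.ncard_image_of_injOn hinj]
    -- cardinality of Tset s
    have hTcard : (Tset s).card = (Tset s').card + 2 := by
      rcases hztri with h' | h' | h'
      · -- z = g ∈ Tset s'
        have hga : g * fa ∉ insert (g * fb) (Tset s') := by
          simp only [Finset.mem_insert, not_or]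
          exact ⟨ga_ne_gb, hfresh (g * fa) (Or.inr (Or.inl rfl)) (h' ▸ Ne.symm g_ne_ga)⟩
        have hgb : g * fb ∉ Tset s' := hfresh (g * fb) (Or.inr (Or.inr rfl)) (h' ▸ Ne.symm g_ne_gb)
        rw [hT, Finset.insert_eq_self.mpr (by
          simp only [Finset.mem_insert]
          exact Or.inr (Or.inr (h' ▸ hzT))),
          Finset.card_insert_of_notMem hga, Finset.card_insert_of_notMem hgb]
      · -- z = g * fa
        have hgg : g ∉ insert (g * fa) (insert (g * fb) (Tset s')) := by
          simp only [Finset.mem_insert, not_or]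
          exact ⟨g_ne_ga, g_ne_gb, hfresh g (Or.inl rfl) (h' ▸ g_ne_ga)⟩
        have hgb : g * fb ∉ Tset s' := hfresh (g * fb) (Or.inr (Or.inr rfl)) (h' ▸ Ne.symm ga_ne_gb)
        rw [hT, Finset.card_insert_of_notMem hgg, Finset.insert_eq_self.mpr (by
          simp only [Finset.mem_insert]
          exact Or.inr (h' ▸ hzT)),
          Finset.card_insert_of_notMem hgb]
      · -- z = g * fb
        have hgg : g ∉ insert (g * fa) (insert (g * fb) (Tset s')) := by
          simp only [Finset.mem_insert, not_or]
          exact ⟨g_ne_ga, g_ne_gb, hfresh g (Or.inl rfl) (h' ▸ g_ne_gb)⟩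
        have hga : g * fa ∉ insert (g * fb) (Tset s') := by
          simp only [Finset.mem_insert, not_or]
          exact ⟨ga_ne_gb, hfresh (g * fa) (Or.inr (Or.inl rfl)) (h' ▸ ga_ne_gb)⟩
        rw [hT, Finset.card_insert_of_notMem hgg, Finset.card_insert_of_notMem hga,
          Finset.insert_eq_self.mpr (h' ▸ hzT)]
    rw [hn, hcard, hTcard]
    have harith : 2 * (s'.card + 1) = 2 * s'.card + 2 := by ring
    rw [harith, pow_add, pow_add, ← IH]
    ring
  · -- Case A: none of g, ga, gb is an old coordinate
    have hItriv : ∀ u, (u = g ∨ u = g * fa ∨ u = g * fb) → u ∉ Tset s' := by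
      intro u htri hu
      exact hB ((hz u hu htri) ▸ ⟨hu, htri⟩)
    have hagA : ∀ v ω', ∀ u ∈ Tset s', Φ v ω' u = ω' u := by
      intro v ω' u hu
      apply e4 <;> (intro h'; exact hItriv u (by tauto) hu)
    set zeroA : (F2 → ZMod 2) → (F2 → ZMod 2) := fun ω h =>
      if h = g ∨ h = g * fa ∨ h = g * fb then 0 else ω h with hzeroA
    have zeroA_eq : ∀ ω u, ¬(u = g ∨ u = g * fa ∨ u = g * fb) → zeroA ω u = ω u := by
      intro ω u h; simp only [hzeroA, if_neg h]
    have memA : ∀ ω, ω ∈ Sol s c → zeroA ω ∈ Sol s' c := by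
      rintro ω ⟨hsupp, hecon⟩
      constructor
      · intro i hi
        by_cases hc : i = g ∨ i = g * fa ∨ i = g * fb
        · simp only [hzeroA, if_pos hc]
        · rw [zeroA_eq _ _ hc]
          push_neg at hc
          exact hsupp i (memT i hc.1 hc.2.1 hc.2.2 hi)
      · refine econ_congr (ω₁ := ω) ?_ (econ_of ω hecon)
        intro i hi
        rw [zeroA_eq _ _ (fun h => hItriv i h hi)]
    have rtA : ∀ ω, ω ∈ Sol s c → Φ (ω g) (zeroA ω) = ω := by
      rintro ω ⟨hsupp, hecon⟩
      funext u
      by_cases h1 : u = g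
      · rw [h1, e1]
      · by_cases h2 : u = g * fa
        · rw [h2, e2, ((hecon g hg).1).symm]
        · by_cases h3 : u = g * fb
          · rw [h3, e3, ((hecon g hg).2).symm]
          · rw [e4 _ _ _ h1 h2 h3, zeroA_eq _ _ (by tauto)]
    have himg : Sol s c = (Φ 0) '' (Sol s' c) ∪ (Φ 1) '' (Sol s' c) := by
      apply Set.eq_of_subset_of_subset
      · intro ω hω
        have hv : ω g = 0 ∨ ω g = 1 := by
          have : ∀ w : ZMod 2, w = 0 ∨ w = 1 := by decide
          exact this (ω g)
        rcases hv with hv | hv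
        · exact Or.inl ⟨zeroA ω, memA ω hω, by rw [← hv]; exact rtA ω hω⟩
        · exact Or.inr ⟨zeroA ω, memA ω hω, by rw [← hv]; exact rtA ω hω⟩
      · rintro ω (⟨ω', hω', rfl⟩ | ⟨ω', hω', rfl⟩)
        · exact mem1 _ _ hω' (hagA 0 ω')
        · exact mem1 _ _ hω' (hagA 1 ω')
    have hinjA : ∀ v, Set.InjOn (Φ v) (Sol s' c) := by
      intro v ω₁ h₁ ω₂ h₂ h
      funext u
      by_cases htri : u = g ∨ u = g * fa ∨ u = g * fb
      · rw [h₁.1 u (hItriv u htri), h₂.1 u (hItriv u htri)]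
      · push_neg at htri
        have := congrFun h u
        rwa [e4 _ _ _ htri.1 htri.2.1 htri.2.2, e4 _ _ _ htri.1 htri.2.1 htri.2.2] at this
    have hdisj : Disjoint ((Φ 0) '' (Sol s' c)) ((Φ 1) '' (Sol s' c)) := by
      rw [Set.disjoint_left]
      rintro ω ⟨ω₁, -, rfl⟩ ⟨ω₂, -, h⟩
      have := congrFun h g
      rw [e1, e1] at this
      exact absurd this (by decide)
    have hn : (Sol s c).ncard = 2 * (Sol s' c).ncard := by
      rw [himg, Set.ncard_union_eq hdisj ((sol_finite s' c).image _) ((sol_finite s' c).image _),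
        Set.ncard_image_of_injOn (hinjA 0), Set.ncard_image_of_injOn (hinjA 1)]
      ring
    have hTcard : (Tset s).card = (Tset s').card + 3 := by
      have hgb : g * fb ∉ Tset s' := hItriv (g * fb) (Or.inr (Or.inr rfl))
      have hga : g * fa ∉ insert (g * fb) (Tset s') := by
        simp only [Finset.mem_insert, not_or]
        exact ⟨ga_ne_gb, hItriv (g * fa) (Or.inr (Or.inl rfl))⟩
      have hgg : g ∉ insert (g * fa) (insert (g * fb) (Tset s')) := by
        simp only [Finset.mem_insert, not_or]
        exact ⟨g_ne_ga, g_ne_gb, hItriv g (Or.inl rfl)⟩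
      rw [hT, Finset.card_insert_of_notMem hgg, Finset.card_insert_of_notMem hga,
        Finset.card_insert_of_notMem hgb]
    rw [hn, hcard, hTcard]
    have harith : 2 * (s'.card + 1) = 2 * s'.card + 2 := by ring
    rw [harith, pow_add, pow_add, ← IH]
    ring

end Count

section MeasureUnique
open MeasureTheory
open scoped Classical

variable {ι K : Type*} [MeasurableSpace K]

/-- The boxes: finite intersections of coordinate conditions. -/
def boxes (ι K : Type*) [MeasurableSpace K] : Set (Set (ι → K)) :=
  {E | ∃ (s : Finset ι) (A : ι → Set K),
    (∀ i ∈ s, MeasurableSet (A i)) ∧ E = {x | ∀ i ∈ s, x i ∈ A i}}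

lemma generateFrom_boxes :
    (MeasurableSpace.pi : MeasurableSpace (ι → K)) = .generateFrom (boxes ι K) := by
  apply le_antisymm
  · apply iSup_le
    intro i
    rw [← measurable_iff_comap_le]
    intro t ht
    apply MeasurableSpace.measurableSet_generateFrom
    refine ⟨{i}, fun _ => t, fun _ _ => ht, ?_⟩
    ext x
    simp
  · apply MeasurableSpace.generateFrom_le
    rintro E ⟨s, A, hA, rfl⟩
    have : {x : ι → K | ∀ i ∈ s, x i ∈ A i} = ⋂ i ∈ s, (fun x => x i) ⁻¹' (A i) := by
      ext x; simp
    rw [this]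
    exact MeasurableSet.biInter s.countable_toSet
      (fun i hi => measurable_pi_apply i (hA i hi))

lemma isPiSystem_boxes : IsPiSystem (boxes ι K) := by
  rintro E₁ ⟨s, A, hA, rfl⟩ E₂ ⟨t, B, hB, rfl⟩ -
  refine ⟨s ∪ t, fun i => (if i ∈ s then A i else Set.univ) ∩ (if i ∈ t then B i else Set.univ),
    ?_, ?_⟩
  · intro i _
    apply MeasurableSet.inter <;> split_ifs with h
    · exact hA i h
    · exact MeasurableSet.univ
    · exact hB i h
    · exact MeasurableSet.univ
  · ext x
    simp only [Set.mem_inter_iff, Set.mem_setOf_eq]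
    constructor
    · rintro ⟨h1, h2⟩ i hi
      constructor <;> split_ifs with h
      · exact h1 i h
      · trivial
      · exact h2 i h
      · trivial
    · intro h
      constructor
      · intro i hi
        have := (h i (Finset.mem_union_left _ hi)).1
        rwa [if_pos hi] at this
      · intro i hi
        have := (h i (Finset.mem_union_right _ hi)).2
        rwa [if_pos hi] at this

lemma prod_unique {μ ν : Measure (ι → K)} {κ : ι → Measure K}
    (hμ : IsProductMeasure (K := fun _ : ι => K) μ κ)
    (hν : IsProductMeasure (K := fun _ : ι => K) ν κ) : μ = ν := by
  haveI : IsProbabilityMeasure μ := hμ.1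
  haveI : IsProbabilityMeasure ν := hν.1
  refine ext_of_generate_finite (boxes ι K) generateFrom_boxes isPiSystem_boxes ?_ (by simp)
  rintro E ⟨s, A, hA, rfl⟩
  rw [hμ.2 s A hA, hν.2 s A hA]

end MeasureUnique

section Atoms
open MeasureTheory
open scoped Classical

lemma u2_singleton (k : ZMod 2) : u2 {k} = 2⁻¹ := by
  rw [u2, PMF.toMeasure_apply_singleton _ _ (measurableSet_singleton k),
    PMF.uniformOfFintype_apply]
  norm_num

lemma u4_apply (A : Set (ZMod 2 × ZMod 2)) :
    u4 A = ((Finset.univ.filter (· ∈ A)).card : ℝ≥0∞) * 4⁻¹ := by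
  classical
  rw [u4, PMF.toMeasure_apply_fintype]
  have : ∀ k : ZMod 2 × ZMod 2,
      A.indicator (⇑(PMF.uniformOfFintype (ZMod 2 × ZMod 2))) k
        = if k ∈ A then 4⁻¹ else 0 := by
    intro k
    by_cases hk : k ∈ A
    · rw [Set.indicator_of_mem hk, PMF.uniformOfFintype_apply, if_pos hk]
      norm_num
    · rw [Set.indicator_of_notMem hk, if_neg hk]
  simp only [this]
  rw [Finset.sum_ite, Finset.sum_const, Finset.sum_const]
  simp [mul_comm]

variable {μ₂ : Measure (F2 → ZMod 2)}

lemma atom_meas (hμ₂ : IsProductMeasure μ₂ (fun _ => u2)) (t : Finset F2) (ω : F2 → ZMod 2) :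
    μ₂ {x | ∀ i ∈ t, x i = ω i} = 2⁻¹ ^ t.card := by
  have h := hμ₂.2 t (fun i => {ω i}) (fun i _ => measurableSet_singleton _)
  simp only [Set.mem_singleton_iff] at h
  rw [h]
  simp [u2_singleton]

lemma z2swap (a b c : ZMod 2) : a + b = c ↔ b = a + c := by revert a b c; decide

lemma owMap_constraint (s : Finset F2) (c : F2 → ZMod 2 × ZMod 2) :
    {x : F2 → ZMod 2 | ∀ g ∈ s, owMap x g = c g} = {x | Econ s c x} := by
  ext x
  simp only [Set.mem_setOf_eq, owMap, Prod.ext_iff, Econ]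
  refine forall₂_congr fun g _ => ?_
  rw [z2swap, z2swap]

lemma atom_measurable (t : Finset F2) (ω : F2 → ZMod 2) :
    MeasurableSet {x : F2 → ZMod 2 | ∀ i ∈ t, x i = ω i} := by
  have : {x : F2 → ZMod 2 | ∀ i ∈ t, x i = ω i}
      = ⋂ i ∈ t, (fun x : F2 → ZMod 2 => x i) ⁻¹' {ω i} := by
    ext x; simp
  rw [this]
  exact MeasurableSet.biInter t.countable_toSet
    (fun i _ => measurable_pi_apply i (measurableSet_singleton _))

/-- The measure of the event given by the constraints from `s`. -/
lemma econ_meas (hμ₂ : IsProductMeasure μ₂ (fun _ => u2)) (s : Finset F2)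
    (c : F2 → ZMod 2 × ZMod 2) :
    μ₂ {x | Econ s c x} = 4⁻¹ ^ s.card := by
  classical
  set t := Tset s
  have hdecomp : {x | Econ s c x} =
      ⋃ ω ∈ (sol_finite s c).toFinset, {x : F2 → ZMod 2 | ∀ i ∈ t, x i = ω i} := by
    ext x
    simp only [Set.mem_setOf_eq, Set.mem_iUnion, Set.Finite.mem_toFinset, exists_prop]
    constructor
    · intro hx
      refine ⟨fun i => if i ∈ t then x i else 0, ⟨fun i hi => if_neg hi, ?_⟩, ?_⟩
      · exact econ_congr (fun i hi => (if_pos hi).symm) hx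
      · intro i hi
        show x i = if i ∈ t then x i else 0
        rw [if_pos hi]
    · rintro ⟨ω, hω, hx⟩
      exact econ_congr (fun i hi => (hx i hi).symm) hω.2
  rw [hdecomp, measure_biUnion_finset ?_ (fun ω _ => atom_measurable t ω)]
  · rw [Finset.sum_congr rfl (fun ω _ => atom_meas hμ₂ t ω), Finset.sum_const,
      ← Set.ncard_eq_toFinset_card _ (sol_finite s c)]
    -- now use the counting lemma
    have hcount := sol_count c s
    have hc : ((Sol s c).ncard : ℝ≥0∞) * 2 ^ (2 * s.card) = 2 ^ t.card := by
      have := congrArg (fun n : ℕ => (n : ℝ≥0∞)) hcount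
      push_cast at this
      exact this
    have h2 : (2 : ℝ≥0∞) ^ (2 * s.card) ≠ 0 := by positivity
    have h3 : (2 : ℝ≥0∞) ^ (2 * s.card) ≠ ⊤ := by
      exact ENNReal.pow_ne_top (by norm_num)
    have key : ((Sol s c).ncard : ℝ≥0∞) = 2 ^ t.card * (2 ^ (2 * s.card))⁻¹ := by
      rw [← hc, mul_assoc, ENNReal.mul_inv_cancel h2 h3, mul_one]
    rw [nsmul_eq_mul, key]
    rw [show ((2:ℝ≥0∞)⁻¹) ^ t.card = (2 ^ t.card)⁻¹ by rw [ENNReal.inv_pow]]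
    rw [mul_comm ((2:ℝ≥0∞) ^ t.card) _, mul_assoc,
      ENNReal.mul_inv_cancel (by positivity) (ENNReal.pow_ne_top (by norm_num)), mul_one]
    rw [show ((4:ℝ≥0∞)⁻¹) ^ s.card = (4 ^ s.card)⁻¹ by rw [ENNReal.inv_pow]]
    congr 1
    rw [pow_mul]
    norm_num
  · -- pairwise disjointness of the atoms
    intro ω₁ h₁ ω₂ h₂ hne
    simp only [Finset.mem_coe, Set.Finite.mem_toFinset] at h₁ h₂
    refine Set.disjoint_left.mpr fun x hx₁ hx₂ => hne ?_
    funext i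
    by_cases hi : i ∈ t
    · rw [← hx₁ i hi, ← hx₂ i hi]
    · rw [h₁.1 i hi, h₂.1 i hi]

end Atoms

section Final
open MeasureTheory
open scoped Classical

lemma owMap_measurable : Measurable owMap := by
  rw [measurable_pi_iff]
  intro g
  have h1 : Measurable ((fun p : ZMod 2 × ZMod 2 => p.1 + p.2) ∘
      fun x : F2 → ZMod 2 => (x g, x (g * fa))) :=
    (measurable_of_countable (fun p : ZMod 2 × ZMod 2 => p.1 + p.2)).comp
      ((measurable_pi_apply g).prodMk (measurable_pi_apply (g * fa)))
  have h2 : Measurable ((fun p : ZMod 2 × ZMod 2 => p.1 + p.2) ∘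
      fun x : F2 → ZMod 2 => (x g, x (g * fb))) :=
    (measurable_of_countable (fun p : ZMod 2 × ZMod 2 => p.1 + p.2)).comp
      ((measurable_pi_apply g).prodMk (measurable_pi_apply (g * fb)))
  exact h1.prodMk h2

lemma box_measurable {K : Type*} [MeasurableSpace K] (s : Finset F2) (A : F2 → Set K)
    (hA : ∀ g ∈ s, MeasurableSet (A g)) :
    MeasurableSet {y : F2 → K | ∀ g ∈ s, y g ∈ A g} := by
  have : {y : F2 → K | ∀ g ∈ s, y g ∈ A g} = ⋂ g ∈ s, (fun y : F2 → K => y g) ⁻¹' (A g) := by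
    ext y; simp
  rw [this]
  exact MeasurableSet.biInter s.countable_toSet (fun g hg => measurable_pi_apply g (hA g hg))

lemma push_boxes {μ₂ : Measure (F2 → ZMod 2)} (hμ₂ : IsProductMeasure μ₂ (fun _ => u2))
    (s : Finset F2) (A : F2 → Set (ZMod 2 × ZMod 2)) :
    μ₂ (owMap ⁻¹' {y | ∀ g ∈ s, y g ∈ A g}) = ∏ g ∈ s, u4 (A g) := by
  classical
  set FA : F2 → Finset (ZMod 2 × ZMod 2) := fun g => Finset.univ.filter (· ∈ A g) with hFA
  have hsets : ∀ γ : (∀ g ∈ s, ZMod 2 × ZMod 2),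
      {x : F2 → ZMod 2 | ∀ g (hg : g ∈ s), owMap x g = γ g hg}
        = {x | Econ s (fun g => if h : g ∈ s then γ g h else 0) x} := by
    intro γ
    rw [← owMap_constraint]
    ext x
    simp only [Set.mem_setOf_eq]
    constructor
    · intro hx g hg
      rw [hx g hg, dif_pos hg]
    · intro hx g hg
      rw [hx g hg, dif_pos hg]
  have hdec : owMap ⁻¹' {y | ∀ g ∈ s, y g ∈ A g}
      = ⋃ γ ∈ s.pi FA, {x : F2 → ZMod 2 | ∀ g (hg : g ∈ s), owMap x g = γ g hg} := by
    ext x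
    simp only [Set.mem_preimage, Set.mem_setOf_eq, Set.mem_iUnion, exists_prop]
    constructor
    · intro hx
      refine ⟨fun g hg => owMap x g, ?_, fun g hg => rfl⟩
      rw [Finset.mem_pi]
      intro g hg
      rw [hFA]
      simp only [Finset.mem_filter, Finset.mem_univ, true_and]
      exact hx g hg
    · rintro ⟨γ, hγ, hx⟩ g hg
      rw [Finset.mem_pi] at hγ
      have := hγ g hg
      rw [hFA] at this
      simp only [Finset.mem_filter, Finset.mem_univ, true_and] at this
      rw [hx g hg]
      exact this
  have hmeas : ∀ γ : (∀ g ∈ s, ZMod 2 × ZMod 2),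
      MeasurableSet {x : F2 → ZMod 2 | ∀ g (hg : g ∈ s), owMap x g = γ g hg} := by
    intro γ
    have : {x : F2 → ZMod 2 | ∀ g (hg : g ∈ s), owMap x g = γ g hg}
        = owMap ⁻¹' {y | ∀ g ∈ s, y g ∈ ({if h : g ∈ s then γ g h else 0} : Set _)} := by
      ext x
      simp only [Set.mem_preimage, Set.mem_setOf_eq, Set.mem_singleton_iff]
      constructor
      · intro hx g hg
        rw [hx g hg, dif_pos hg]
      · intro hx g hg
        rw [hx g hg, dif_pos hg]
    rw [this]
    exact owMap_measurable (box_measurable s _ (fun _ _ => measurableSet_singleton _))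
  have hdisj : Set.PairwiseDisjoint ↑(s.pi FA)
      (fun γ : (∀ g ∈ s, ZMod 2 × ZMod 2) =>
        {x : F2 → ZMod 2 | ∀ g (hg : g ∈ s), owMap x g = γ g hg}) := by
    intro γ₁ h₁ γ₂ h₂ hne
    refine Set.disjoint_left.mpr fun x hx₁ hx₂ => hne ?_
    funext g hg
    rw [← hx₁ g hg, ← hx₂ g hg]
  rw [hdec, measure_biUnion_finset hdisj (fun γ _ => hmeas γ),
    Finset.sum_congr rfl (fun γ _ => by rw [hsets γ, econ_meas hμ₂]),
    Finset.sum_const, Finset.card_pi, nsmul_eq_mul, Nat.cast_prod,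
    Finset.prod_congr rfl (fun g (_ : g ∈ s) => u4_apply (A g)),
    Finset.prod_mul_distrib, Finset.prod_const]

end Final

end OW


open OW in
/-- **Ornstein–Weiss.** The map `φ(x)(g) = (x(g) + x(ga), x(g) + x(gb))` is a factor map from
the Bernoulli shift `(𝔽, U₂^𝔽, u₂^𝔽)` onto the Bernoulli shift `(𝔽, U₄^𝔽, u₄^𝔽)`:  it is
measurable, `𝔽`-equivariant for the shift actions, and pushes `u₂^𝔽` forward to `u₄^𝔽`. -/
theorem ornstein_weiss_factor_map
    (μ₂ : Measure (F2 → ZMod 2)) (μ₄ : Measure (F2 → ZMod 2 × ZMod 2))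
    (hμ₂ : IsProductMeasure μ₂ (fun _ => u2)) (hμ₄ : IsProductMeasure μ₄ (fun _ => u4)) :
    Measurable owMap ∧
    (∀ (g : F2) (x : F2 → ZMod 2),
      owMap (bshift F2 (ZMod 2) g x) = bshift F2 (ZMod 2 × ZMod 2) g (owMap x)) ∧
    Measure.map owMap μ₂ = μ₄ := by
  refine ⟨OW.owMap_measurable, ?_, ?_⟩
  · intro g x
    funext f
    simp [owMap, bshift, mul_assoc]
  · haveI : IsProbabilityMeasure μ₂ := hμ₂.1
    refine OW.prod_unique (κ := fun _ => u4) ⟨?_, ?_⟩ hμ₄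
    · exact Measure.isProbabilityMeasure_map OW.owMap_measurable.aemeasurable
    · intro s A hA
      rw [Measure.map_apply OW.owMap_measurable (OW.box_measurable s A hA)]
      exact OW.push_boxes hμ₂ s A
end

section
/- Let 𝔽 = ⟨a,b⟩ be the free group of rank 2. The map φ: (ℤ/2ℤ)^𝔽 → (ℤ/2ℤ × ℤ/2ℤ)^𝔽 defined by φ(x)(g) = (x(g) + x(ga), x(g) + x(gb)) is a surjective group homomorphism, where the group operations on (ℤ/2ℤ)^𝔽 and (ℤ/2ℤ × ℤ/2ℤ)^𝔽 are pointwise addition. -/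
open MeasureTheory ENNReal

namespace OWaux

open FreeGroup

/-- Tail of a reduced word is reduced. -/
lemma reduce_tail {α : Type*} [DecidableEq α] {x : α × Bool} {L : List (α × Bool)}
    (h : reduce (x :: L) = x :: L) : reduce L = L := by
  cases hL : reduce L with
  | nil =>
    have hc : reduce (x :: L) = [x] := by rw [reduce.cons, hL]
    rw [h] at hc
    injection hc with _ h2
    exact h2.symm
  | cons hd tl =>
    have hc : reduce (x :: L) = if x.1 = hd.1 ∧ x.2 = !hd.2 then tl else x :: hd :: tl := by
      rw [reduce.cons, hL]
    by_cases hif : x.1 = hd.1 ∧ x.2 = !hd.2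
    · rw [if_pos hif, h] at hc
      have hle : (reduce L).length ≤ L.length := Red.length_le reduce.red
      rw [hL] at hle
      have e1 := congrArg List.length hc
      simp only [List.length_cons] at e1 hle
      omega
    · rw [if_neg hif, h] at hc
      injection hc with _ h2
      exact h2.symm

/-- The coefficient to add along an `i`-edge ending at `h`. -/
def cc (y : FreeGroup (Fin 2) → ZMod 2 × ZMod 2) (i : Fin 2) (h : FreeGroup (Fin 2)) : ZMod 2 :=
  if i = 0 then (y h⁻¹).1 else (y h⁻¹).2

/-- Value of the preimage along a word, built from the left. -/
def Z (y : FreeGroup (Fin 2) → ZMod 2 × ZMod 2) : List (Fin 2 × Bool) → ZMod 2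
  | [] => 0
  | (i, b) :: L => Z y L +
      (if b then cc y i (FreeGroup.mk ((i, b) :: L))
       else cc y i (FreeGroup.of i * FreeGroup.mk ((i, b) :: L)))

lemma inv_of_eq (i : Fin 2) : (FreeGroup.of i)⁻¹ = FreeGroup.mk [(i, false)] := by
  rw [FreeGroup.of, FreeGroup.inv_mk]; rfl

lemma key (y : FreeGroup (Fin 2) → ZMod 2 × ZMod 2) (h : FreeGroup (Fin 2)) (i : Fin 2) :
    Z y h.toWord + Z y ((FreeGroup.of i)⁻¹ * h).toWord = cc y i h := by
  have hmul : ((FreeGroup.of i)⁻¹ * h).toWord = reduce ((i, false) :: h.toWord) := by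
    rw [inv_of_eq, ← FreeGroup.mk_toWord (x := h), FreeGroup.mul_mk, FreeGroup.mk_toWord,
      FreeGroup.toWord_mk]
    rfl
  have hred : reduce h.toWord = h.toWord := reduce_toWord h
  cases hw : h.toWord with
  | nil =>
    have h1 : h = 1 := FreeGroup.toWord_eq_nil_iff.mp hw
    rw [hw] at hmul
    rw [hmul, FreeGroup.reduce_singleton]
    show Z y [] + (Z y [] + _) = cc y i h
    simp only [Z, Bool.false_eq_true, if_false, zero_add]
    rw [← inv_of_eq, h1, mul_inv_cancel]
  | cons hd tl =>
    obtain ⟨j, b⟩ := hd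
    rw [hw] at hred hmul
    have hc : ((FreeGroup.of i)⁻¹ * h).toWord =
        if (i : Fin 2) = j ∧ (false : Bool) = !b then tl else (i, false) :: (j, b) :: tl := by
      rw [hmul, reduce.cons, hred]
    by_cases hif : (i : Fin 2) = j ∧ (false : Bool) = !b
    · obtain ⟨rfl, hb⟩ := hif
      have hb' : b = true := by
        cases b with
        | false => exact absurd hb (by decide)
        | true => rfl
      subst hb'
      rw [if_pos ⟨rfl, rfl⟩] at hc
      rw [hc]
      have hmk : FreeGroup.mk ((i, true) :: tl) = h := by rw [← hw, FreeGroup.mk_toWord]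
      rw [show Z y ((i, true) :: tl) = Z y tl + cc y i (FreeGroup.mk ((i, true) :: tl)) from
        by simp [Z]]
      rw [hmk, add_right_comm, CharTwo.add_self_eq_zero, zero_add]
    · rw [if_neg hif] at hc
      rw [hc]
      have hmk : FreeGroup.of i * FreeGroup.mk ((i, false) :: (j, b) :: tl) = h := by
        rw [FreeGroup.of, FreeGroup.mul_mk]
        have hstep : FreeGroup.mk ([(i, true)] ++ (i, false) :: (j, b) :: tl)
            = FreeGroup.mk ((j, b) :: tl) := by
          apply FreeGroup.reduce.exact
          apply FreeGroup.reduce.Step.eq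
          exact @FreeGroup.Red.Step.not _ [] ((j, b) :: tl) i true
        rw [hstep, ← hw, FreeGroup.mk_toWord]
      rw [show Z y ((i, false) :: (j, b) :: tl) = Z y ((j, b) :: tl) +
          cc y i (FreeGroup.of i * FreeGroup.mk ((i, false) :: (j, b) :: tl)) from by simp [Z]]
      rw [hmk, ← add_assoc, CharTwo.add_self_eq_zero, zero_add]

end OWaux

/-- The Ornstein–Weiss map `φ(x)(g) = (x(g) + x(ga), x(g) + x(gb))` is a surjective group
homomorphism for the pointwise group structures on `(ℤ/2ℤ)^𝔽` and `(ℤ/2ℤ × ℤ/2ℤ)^𝔽`. -/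
theorem owMap_surjective_addHom :
    Function.Surjective owMap ∧
    ∀ x y : F2 → ZMod 2, owMap (x + y) = owMap x + owMap y := by
  constructor
  · intro y
    refine ⟨fun g => OWaux.Z y (FreeGroup.toWord g⁻¹), ?_⟩
    funext g
    have h1 := OWaux.key y g⁻¹ 0
    have h2 := OWaux.key y g⁻¹ 1
    rw [OWaux.cc, if_pos rfl, inv_inv] at h1
    rw [OWaux.cc, if_neg (by decide), inv_inv] at h2
    have e1 : (g * fa)⁻¹ = (FreeGroup.of 0)⁻¹ * g⁻¹ := by rw [mul_inv_rev]; rfl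
    have e2 : (g * fb)⁻¹ = (FreeGroup.of 1)⁻¹ * g⁻¹ := by rw [mul_inv_rev]; rfl
    show (OWaux.Z y g⁻¹.toWord + OWaux.Z y ((g * fa)⁻¹).toWord,
      OWaux.Z y g⁻¹.toWord + OWaux.Z y ((g * fb)⁻¹).toWord) = ((y g).1, (y g).2)
    rw [e1, e2, h1, h2]
  · intro x y
    funext g
    show ((_ : ZMod 2), (_ : ZMod 2)) = _
    simp only [owMap, Pi.add_apply, Prod.mk_add_mk, Prod.mk.injEq]
    constructor <;> ring
end

section
/- (Tímar.) Let 𝔽 = ⟨a,b⟩ be the free group of rank 2, let U₂ = ℤ/2ℤ with the uniform probability measure u₂, and let U_∞ = (ℤ/2ℤ)^ℕ with the product measure u_∞ = u₂^ℕ. Then there exists a factor map Φ from the Bernoulli shift (𝔽, U₂^𝔽, u₂^𝔽) onto the Bernoulli shift (𝔽, U_∞^𝔽, u_∞^𝔽). -/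
open MeasureTheory ENNReal

noncomputable section
namespace TimarAux

/-! ### The potential construction -/

def trM (u : F2) : Multiplicative (F2 → ZMod 2) ≃* Multiplicative (F2 → ZMod 2) where
  toFun z := Multiplicative.ofAdd (fun h => Multiplicative.toAdd z (u⁻¹ * h))
  invFun z := Multiplicative.ofAdd (fun h => Multiplicative.toAdd z (u * h))
  left_inv z := by simp [mul_assoc]
  right_inv z := by simp [mul_assoc]
  map_mul' z w := rfl

def trHom : F2 →* MulAut (Multiplicative (F2 → ZMod 2)) where
  toFun := trM
  map_one' := by ext z; show Multiplicative.toAdd _ = Multiplicative.toAdd _; simp [trM]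
  map_mul' u v := by
    ext z; show Multiplicative.toAdd _ = Multiplicative.toAdd _
    simp [trM, MulAut.mul_apply, mul_assoc]

def Psi (ℓ : F2 → Fin 2 → ZMod 2) : F2 →* Multiplicative (F2 → ZMod 2) ⋊[trHom] F2 :=
  FreeGroup.lift (fun i => ⟨Multiplicative.ofAdd (fun h => ℓ h⁻¹ i), FreeGroup.of i⟩)

lemma Psi_right (ℓ : F2 → Fin 2 → ZMod 2) (w : F2) : (Psi ℓ w).right = w := by
  have : SemidirectProduct.rightHom.comp (Psi ℓ) = MonoidHom.id F2 := by
    apply FreeGroup.ext_hom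
    intro i
    simp [Psi]
  exact congrFun (congrArg (fun f => f.toFun) this) w

def pot (ℓ : F2 → Fin 2 → ZMod 2) (w : F2) : ZMod 2 :=
  Multiplicative.toAdd ((Psi ℓ w).left) 1

lemma pot_spec (ℓ : F2 → Fin 2 → ZMod 2) (g : F2) (i : Fin 2) :
    pot ℓ (g * FreeGroup.of i) = pot ℓ g + ℓ g i := by
  have h1 : Psi ℓ (g * FreeGroup.of i) = Psi ℓ g * Psi ℓ (FreeGroup.of i) := map_mul _ _ _
  have h2 : Psi ℓ (FreeGroup.of i) = ⟨Multiplicative.ofAdd (fun h => ℓ h⁻¹ i), FreeGroup.of i⟩ := by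
    simp [Psi]
  have h3 : (Psi ℓ (g * FreeGroup.of i)).left
      = (Psi ℓ g).left * trHom (Psi ℓ g).right (Multiplicative.ofAdd (fun h => ℓ h⁻¹ i)) := by
    rw [h1, h2]; rfl
  rw [pot, pot, h3, Psi_right]
  show (Multiplicative.toAdd ((Psi ℓ g).left) + fun h => ℓ (g⁻¹ * h)⁻¹ i) 1 = _
  simp [trHom, trM]

/-! ### ZMod 2 arithmetic -/

lemma zmod2_add_add : ∀ a b : ZMod 2, a + (a + b) = b := by decide
lemma zmod2_add_eq_zero : ∀ a b : ZMod 2, a + b = 0 ↔ a = b := by decide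

/-! ### Ornstein–Weiss surjectivity and iteration -/

lemma ow_surj (u v : F2 → ZMod 2) :
    ∃ y : F2 → ZMod 2, (∀ g, y g + y (g * fa) = u g) ∧ (fun g => y g + y (g * fb)) = v := by
  refine ⟨pot (fun g i => if i = 0 then u g else v g), fun g => ?_, funext fun g => ?_⟩
  · rw [show fa = FreeGroup.of 0 from rfl, pot_spec]
    simp [zmod2_add_add]
  · rw [show fb = FreeGroup.of 1 from rfl, pot_spec]
    simp [zmod2_add_add]

def iterB : ℕ → (F2 → ZMod 2) → (F2 → ZMod 2)
  | 0, x => x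
  | n + 1, x => iterB n (fun g => x g + x (g * fb))

lemma level_surj (N : ℕ) (c : ℕ → F2 → ZMod 2) :
    ∃ z : F2 → ZMod 2, ∀ n ≤ N, ∀ g, iterB n z g + iterB n z (g * fa) = c n g := by
  induction N generalizing c with
  | zero =>
    obtain ⟨y, hy, -⟩ := ow_surj (c 0) 0
    exact ⟨y, fun n hn g => by interval_cases n; exact hy g⟩
  | succ N ih =>
    obtain ⟨w, hw⟩ := ih (fun n => c (n + 1))
    obtain ⟨y, hy1, hy2⟩ := ow_surj (c 0) w
    refine ⟨y, fun n hn g => ?_⟩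
    match n with
    | 0 => exact hy1 g
    | n + 1 =>
      show iterB n _ g + iterB n _ (g * fa) = _
      rw [hy2]
      exact hw n (by omega) g

/-- the coordinates of the factor map -/
def Y (p : F2 × ℕ) (x : F2 → ZMod 2) : ZMod 2 :=
  iterB p.2 x p.1 + iterB p.2 x (p.1 * fa)

lemma iterB_add (n : ℕ) (x z : F2 → ZMod 2) :
    iterB n (x + z) = iterB n x + iterB n z := by
  induction n generalizing x z with
  | zero => rfl
  | succ n ih =>
    show iterB n _ = _
    have : (fun g => (x + z) g + (x + z) (g * fb))
        = (fun g => x g + x (g * fb)) + (fun g => z g + z (g * fb)) := by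
      funext g
      show x g + z g + (x (g * fb) + z (g * fb)) = _
      exact add_add_add_comm _ _ _ _
    rw [this, ih]
    rfl

lemma Y_add (p : F2 × ℕ) (x z : F2 → ZMod 2) : Y p (x + z) = Y p x + Y p z := by
  simp only [Y, iterB_add, Pi.add_apply]
  exact add_add_add_comm _ _ _ _

lemma measurable_iterB (n : ℕ) (g : F2) :
    Measurable fun x : F2 → ZMod 2 => iterB n x g := by
  induction n generalizing g with
  | zero => exact measurable_pi_apply g
  | succ n ih =>
    have hB : Measurable fun (x : F2 → ZMod 2) (h : F2) => x h + x (h * fb) :=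
      measurable_pi_lambda _ fun h =>
        (measurable_of_countable (fun q : ZMod 2 × ZMod 2 => q.1 + q.2)).comp
          (f := fun c : F2 → ZMod 2 => (c h, c (h * fb)))
          ((measurable_pi_apply h).prodMk (measurable_pi_apply (h * fb)))
    exact ((ih g).comp hB : Measurable fun x : F2 → ZMod 2 => iterB n (fun h => x h + x (h * fb)) g)

lemma measurable_Y (p : F2 × ℕ) : Measurable (Y p) :=
  ((measurable_iterB p.2 p.1).add (measurable_iterB p.2 (p.1 * fa)))

/-! ### Uniqueness of product measures -/

lemma productMeasure_unique {ι : Type*} {K : ι → Type*} [∀ i, MeasurableSpace (K i)]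
    {μ ν : Measure (∀ i, K i)} {κ : ∀ i, Measure (K i)}
    (hμ : IsProductMeasure μ κ) (hν : IsProductMeasure ν κ) : μ = ν := by
  classical
  haveI := hμ.1
  set C : Set (Set (∀ i, K i)) := {S | ∃ (s : Finset ι) (A : ∀ i, Set (K i)),
    (∀ i ∈ s, MeasurableSet (A i)) ∧ S = {x | ∀ i ∈ s, x i ∈ A i}} with hC
  have hgen : (inferInstance : MeasurableSpace (∀ i, K i)) = MeasurableSpace.generateFrom C := by
    apply le_antisymm
    · change (⨆ i, MeasurableSpace.comap (fun x : ∀ i, K i => x i) inferInstance) ≤ _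
      refine iSup_le fun i => ?_
      rw [← measurable_iff_comap_le]
      intro A hA
      apply MeasurableSpace.measurableSet_generateFrom
      refine ⟨{i}, Function.update (fun j => (Set.univ : Set (K j))) i A, ?_, ?_⟩
      · intro j hj
        rcases Finset.mem_singleton.mp hj with rfl
        simpa using hA
      · ext x
        simp [Function.update]
    · apply MeasurableSpace.generateFrom_le
      rintro S ⟨s, A, hA, rfl⟩
      have : {x : ∀ i, K i | ∀ i ∈ s, x i ∈ A i} = ⋂ i ∈ s, (fun x => x i) ⁻¹' (A i) := by
        ext x; simp
      rw [this]
      exact MeasurableSet.biInter s.countable_toSet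
        (fun i hi => (measurable_pi_apply i) (hA i hi))
  have hpi : IsPiSystem C := by
    rintro S ⟨s, A, hA, rfl⟩ T ⟨t, B, hB, rfl⟩ -
    refine ⟨s ∪ t,
      fun i => (if i ∈ s then A i else Set.univ) ∩ (if i ∈ t then B i else Set.univ), ?_, ?_⟩
    · intro i _
      apply MeasurableSet.inter <;> split_ifs with h
      · exact hA i h
      · exact MeasurableSet.univ
      · exact hB i h
      · exact MeasurableSet.univ
    · ext x
      simp only [Set.mem_inter_iff, Set.mem_setOf_eq, Finset.mem_union]
      constructor
      · rintro ⟨h1, h2⟩ i hi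
        constructor <;> split_ifs with h
        · exact h1 i h
        · trivial
        · exact h2 i h
        · trivial
      · intro h
        constructor <;> intro i hi
        · have := (h i (Or.inl hi)).1; rwa [if_pos hi] at this
        · have := (h i (Or.inr hi)).2; rwa [if_pos hi] at this
  refine MeasureTheory.ext_of_generate_finite C hgen hpi ?_ ?_
  · rintro S ⟨s, A, hA, rfl⟩
    rw [hμ.2 s A hA, hν.2 s A hA]
  · haveI := hν.1
    rw [measure_univ, measure_univ]

/-! ### The uniform measure on `ZMod 2` -/

open Classical in
lemma u2_apply (S : Set (ZMod 2)) :
    u2 S = ∑ a : ZMod 2, (if a ∈ S then (2 : ℝ≥0∞)⁻¹ else 0) := by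
  rw [u2, PMF.toMeasure_apply _ MeasurableSet.of_discrete, tsum_fintype]
  congr 1
  funext a
  rw [Set.indicator_apply]
  split_ifs with h
  · simp [PMF.uniformOfFintype_apply]
  · rfl

open Classical in
lemma u2_translate (c : ZMod 2) (S : Set (ZMod 2)) :
    u2 ((fun a => a + c) ⁻¹' S) = u2 S := by
  rw [u2_apply, u2_apply]
  exact Fintype.sum_equiv (Equiv.addRight c) _ _ (fun a => rfl)

/-! ### Translation invariance of the product measure -/

lemma measurable_add_right (z : F2 → ZMod 2) : Measurable fun x : F2 → ZMod 2 => x + z :=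
  measurable_pi_lambda _ fun g =>
    (measurable_of_countable (· + z g)).comp (measurable_pi_apply g)

lemma box_measurable {ι : Type*} {K : ι → Type*} [∀ i, MeasurableSpace (K i)]
    (s : Finset ι) (A : ∀ i, Set (K i)) (hA : ∀ i ∈ s, MeasurableSet (A i)) :
    MeasurableSet {x : ∀ i, K i | ∀ i ∈ s, x i ∈ A i} := by
  have : {x : ∀ i, K i | ∀ i ∈ s, x i ∈ A i} = ⋂ i ∈ s, (fun x => x i) ⁻¹' (A i) := by
    ext x; simp
  rw [this]
  exact MeasurableSet.biInter s.countable_toSet (fun i hi => (measurable_pi_apply i) (hA i hi))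

lemma map_add_right {μ₂ : Measure (F2 → ZMod 2)} (hμ₂ : IsProductMeasure μ₂ (fun _ : F2 => u2))
    (z : F2 → ZMod 2) : Measure.map (fun x => x + z) μ₂ = μ₂ := by
  haveI := hμ₂.1
  refine productMeasure_unique ⟨?_, ?_⟩ hμ₂
  · exact Measure.isProbabilityMeasure_map (measurable_add_right z).aemeasurable
  · intro s A hA
    rw [Measure.map_apply (measurable_add_right z) (box_measurable s A hA)]
    have : (fun x : F2 → ZMod 2 => x + z) ⁻¹' {x | ∀ i ∈ s, x i ∈ A i}
        = {x | ∀ i ∈ s, x i ∈ (fun a => a + z i) ⁻¹' A i} := by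
      ext x; simp
    rw [this, hμ₂.2 s _ (fun i _ => MeasurableSet.of_discrete)]
    exact Finset.prod_congr rfl fun i _ => u2_translate (z i) (A i)

/-! ### The key cylinder computation -/

lemma event_measurable (t : Finset (F2 × ℕ)) (c : F2 × ℕ → ZMod 2) :
    MeasurableSet {x : F2 → ZMod 2 | ∀ p ∈ t, Y p x = c p} := by
  have : {x : F2 → ZMod 2 | ∀ p ∈ t, Y p x = c p} = ⋂ p ∈ t, (Y p) ⁻¹' {c p} := by
    ext x; simp
  rw [this]
  exact MeasurableSet.biInter t.countable_toSet
    (fun p _ => measurable_Y p (measurableSet_singleton _))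

/-- extension of a function on `t` by zero -/
def cExt {t : Finset (F2 × ℕ)} (v : ↥t → ZMod 2) : F2 × ℕ → ZMod 2 :=
  open Classical in fun p => if h : p ∈ t then v ⟨p, h⟩ else 0

lemma cylinder_const {μ₂ : Measure (F2 → ZMod 2)}
    (hμ₂ : IsProductMeasure μ₂ (fun _ : F2 => u2))
    (t : Finset (F2 × ℕ)) (c : F2 × ℕ → ZMod 2) :
    μ₂ {x | ∀ p ∈ t, Y p x = c p} = μ₂ {x | ∀ p ∈ t, Y p x = 0} := by
  obtain ⟨z, hz⟩ := level_surj (t.sup Prod.snd) (fun n g => c (g, n))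
  have hz' : ∀ p ∈ t, Y p z = c p := fun p hp =>
    hz p.2 (Finset.le_sup (f := Prod.snd) hp) p.1
  have hpre : (fun x : F2 → ZMod 2 => x + z) ⁻¹' {x | ∀ p ∈ t, Y p x = 0}
      = {x | ∀ p ∈ t, Y p x = c p} := by
    ext x
    simp only [Set.mem_preimage, Set.mem_setOf_eq]
    refine forall₂_congr fun p hp => ?_
    rw [Y_add, hz' p hp]
    exact zmod2_add_eq_zero _ _
  rw [← hpre, ← Measure.map_apply (measurable_add_right z) (event_measurable t (fun _ => 0)),
    map_add_right hμ₂ z]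

lemma cylinder_singleton {μ₂ : Measure (F2 → ZMod 2)}
    (hμ₂ : IsProductMeasure μ₂ (fun _ : F2 => u2))
    (t : Finset (F2 × ℕ)) (c : F2 × ℕ → ZMod 2) :
    μ₂ {x | ∀ p ∈ t, Y p x = c p} = (2 : ℝ≥0∞)⁻¹ ^ t.card := by
  classical
  haveI := hμ₂.1
  have hcover : (⋃ v : ↥t → ZMod 2, {x : F2 → ZMod 2 | ∀ p ∈ t, Y p x = cExt v p})
      = Set.univ := by
    ext x
    simp only [Set.mem_iUnion, Set.mem_univ, iff_true, Set.mem_setOf_eq]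
    refine ⟨fun p => Y p x, fun p hp => ?_⟩
    rw [cExt, dif_pos hp]
  have hdisj : Pairwise (Function.onFun Disjoint
      fun v : ↥t → ZMod 2 => {x : F2 → ZMod 2 | ∀ p ∈ t, Y p x = cExt v p}) := by
    intro v w hvw
    rw [Function.onFun, Set.disjoint_left]
    intro x hv hw
    apply hvw
    funext p
    have h1 := hv p p.2
    have h2 := hw p p.2
    rw [cExt, dif_pos p.2] at h1 h2
    simp only [Subtype.coe_eta] at h1 h2
    rw [← h1, ← h2]
  have hsum := measure_iUnion (μ := μ₂) hdisj (fun v => event_measurable t (cExt v))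
  rw [hcover, measure_univ, tsum_fintype] at hsum
  have hconst : ∀ v : ↥t → ZMod 2,
      μ₂ {x | ∀ p ∈ t, Y p x = cExt v p} = μ₂ {x | ∀ p ∈ t, Y p x = 0} :=
    fun v => cylinder_const hμ₂ t (cExt v)
  rw [Finset.sum_congr rfl (fun v _ => hconst v), Finset.sum_const, Finset.card_univ,
    nsmul_eq_mul] at hsum
  have hcard : (Fintype.card (↥t → ZMod 2) : ℝ≥0∞) = 2 ^ t.card := by
    rw [Fintype.card_fun, Fintype.card_coe]
    push_cast
    norm_num
  rw [hcard] at hsum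
  have h2 : ((2 : ℝ≥0∞) ^ t.card) ≠ 0 := by positivity
  have h2' : ((2 : ℝ≥0∞) ^ t.card) ≠ ⊤ := by
    exact ENNReal.pow_ne_top (by norm_num)
  have key : μ₂ {x | ∀ p ∈ t, Y p x = 0} = ((2 : ℝ≥0∞) ^ t.card)⁻¹ :=
    calc μ₂ {x | ∀ p ∈ t, Y p x = 0}
        = ((2:ℝ≥0∞) ^ t.card)⁻¹ * ((2:ℝ≥0∞) ^ t.card * μ₂ {x | ∀ p ∈ t, Y p x = 0}) := by
          rw [← mul_assoc, ENNReal.inv_mul_cancel h2 h2', one_mul]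
      _ = ((2:ℝ≥0∞) ^ t.card)⁻¹ * 1 := by rw [← hsum]
      _ = ((2:ℝ≥0∞) ^ t.card)⁻¹ := mul_one _
  rw [cylinder_const hμ₂ t c, key, ENNReal.inv_pow]

open Classical in
lemma cylinder_box {μ₂ : Measure (F2 → ZMod 2)}
    (hμ₂ : IsProductMeasure μ₂ (fun _ : F2 => u2))
    (t : Finset (F2 × ℕ)) (D : F2 × ℕ → Set (ZMod 2)) :
    μ₂ {x | ∀ p ∈ t, Y p x ∈ D p} = ∏ p ∈ t, u2 (D p) := by
  haveI := hμ₂.1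
  -- RHS as a sum over all configurations
  have hRHS : ∏ p ∈ t, u2 (D p)
      = ∑ v : ↥t → ZMod 2, ∏ p : ↥t, (if v p ∈ D p then (2 : ℝ≥0∞)⁻¹ else 0) := by
    rw [← Finset.prod_coe_sort t (fun p => u2 (D p))]
    have : ∀ p : ↥t, u2 (D p.1) = ∑ a ∈ (Finset.univ : Finset (ZMod 2)),
        (if a ∈ D p.1 then (2 : ℝ≥0∞)⁻¹ else 0) := fun p => u2_apply (D p.1)
    rw [Finset.prod_congr rfl (fun p _ => this p), Finset.prod_univ_sum]
    rw [Fintype.piFinset_univ]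
  have hite : ∀ v : ↥t → ZMod 2, (∏ p : ↥t, (if v p ∈ D p then (2 : ℝ≥0∞)⁻¹ else 0))
      = if (∀ p : ↥t, v p ∈ D p.1) then (2 : ℝ≥0∞)⁻¹ ^ t.card else 0 := by
    intro v
    by_cases h : ∀ p : ↥t, v p ∈ D p.1
    · rw [if_pos h, Finset.prod_congr rfl (fun p _ => if_pos (h p)), Finset.prod_const,
        Finset.card_univ, Fintype.card_coe]
    · rw [if_neg h]
      push_neg at h
      obtain ⟨p, hp⟩ := h
      exact Finset.prod_eq_zero (Finset.mem_univ p) (if_neg hp)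
  -- LHS as a union over good configurations
  have hLHS : {x : F2 → ZMod 2 | ∀ p ∈ t, Y p x ∈ D p}
      = ⋃ v ∈ Finset.univ.filter (fun v : ↥t → ZMod 2 => ∀ p : ↥t, v p ∈ D p.1),
          {x | ∀ p ∈ t, Y p x = cExt v p} := by
    ext x
    simp only [Set.mem_setOf_eq, Set.mem_iUnion, Finset.mem_filter, Finset.mem_univ, true_and]
    constructor
    · intro hx
      refine ⟨fun p => Y p x, fun p => hx p p.2, fun p hp => ?_⟩
      rw [cExt, dif_pos hp]
    · rintro ⟨v, hv, hxv⟩ p hp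
      have := hxv p hp
      rw [cExt, dif_pos hp] at this
      rw [this]
      exact hv ⟨p, hp⟩
  rw [hLHS, measure_biUnion_finset ?_ (fun v _ => event_measurable t (cExt v))]
  · rw [Finset.sum_congr rfl (fun v _ => cylinder_singleton hμ₂ t (cExt v)), hRHS,
      Finset.sum_congr rfl (fun v _ => hite v)]
    exact Finset.sum_filter _ _
  · intro v hv w hw hvw
    rw [Function.onFun, Set.disjoint_left]
    intro x h1 h2
    apply hvw
    funext p
    have e1 := h1 p p.2
    have e2 := h2 p p.2
    rw [cExt, dif_pos p.2] at e1 e2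
    simp only [Subtype.coe_eta] at e1 e2
    rw [← e1, ← e2]

/-! ### The factor map and its distribution -/

def Phi : (F2 → ZMod 2) → F2 → ℕ → ZMod 2 := fun x g n => Y (g, n) x

lemma measurable_Phi : Measurable Phi :=
  measurable_pi_lambda _ fun g => measurable_pi_lambda _ fun n => measurable_Y (g, n)

lemma box2_measurable (s : Finset F2) (T : F2 → Finset ℕ) (D : F2 → ℕ → Set (ZMod 2)) :
    MeasurableSet {x : F2 → ℕ → ZMod 2 | ∀ g ∈ s, ∀ n ∈ T g, x g n ∈ D g n} := by
  have : {x : F2 → ℕ → ZMod 2 | ∀ g ∈ s, ∀ n ∈ T g, x g n ∈ D g n}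
      = ⋂ g ∈ s, ⋂ n ∈ T g, (fun x : F2 → ℕ → ZMod 2 => x g n) ⁻¹' (D g n) := by
    ext x; simp
  rw [this]
  exact MeasurableSet.biInter s.countable_toSet fun g _ =>
    MeasurableSet.biInter (T g).countable_toSet fun n _ =>
      ((measurable_pi_apply n).comp (measurable_pi_apply g)) MeasurableSet.of_discrete

lemma map_Phi {uinf : Measure (ℕ → ZMod 2)} (huinf : IsProductMeasure uinf (fun _ : ℕ => u2))
    {μ₂ : Measure (F2 → ZMod 2)} (hμ₂ : IsProductMeasure μ₂ (fun _ : F2 => u2))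
    {μinf : Measure (F2 → ℕ → ZMod 2)} (hμinf : IsProductMeasure μinf (fun _ : F2 => uinf)) :
    Measure.map Phi μ₂ = μinf := by
  classical
  haveI := hμ₂.1
  haveI := hμinf.1
  haveI : IsProbabilityMeasure (Measure.map Phi μ₂) :=
    Measure.isProbabilityMeasure_map measurable_Phi.aemeasurable
  set C : Set (Set (F2 → ℕ → ZMod 2)) := {S | ∃ (s : Finset F2) (T : F2 → Finset ℕ)
    (D : F2 → ℕ → Set (ZMod 2)), S = {x | ∀ g ∈ s, ∀ n ∈ T g, x g n ∈ D g n}} with hCdef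
  have hgen : (inferInstance : MeasurableSpace (F2 → ℕ → ZMod 2))
      = MeasurableSpace.generateFrom C := by
    apply le_antisymm
    · change (⨆ g, MeasurableSpace.comap (fun x : F2 → ℕ → ZMod 2 => x g) inferInstance) ≤ _
      refine iSup_le fun g => ?_
      change MeasurableSpace.comap _
        (⨆ n, MeasurableSpace.comap (fun y : ℕ → ZMod 2 => y n) inferInstance) ≤ _
      rw [MeasurableSpace.comap_iSup]
      refine iSup_le fun n => ?_
      rw [MeasurableSpace.comap_comp, ← measurable_iff_comap_le]
      intro A hA
      apply MeasurableSpace.measurableSet_generateFrom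
      refine ⟨{g}, fun _ => {n}, fun _ _ => A, ?_⟩
      ext x
      simp [Function.comp]
    · apply MeasurableSpace.generateFrom_le
      rintro S ⟨s, T, D, rfl⟩
      exact box2_measurable s T D
  have hpi : IsPiSystem C := by
    rintro S ⟨s, T, D, rfl⟩ S' ⟨s', T', D', rfl⟩ -
    refine ⟨s ∪ s', fun g => T g ∪ T' g, fun g n =>
      (if g ∈ s ∧ n ∈ T g then D g n else Set.univ) ∩
      (if g ∈ s' ∧ n ∈ T' g then D' g n else Set.univ), ?_⟩
    ext x
    simp only [Set.mem_inter_iff, Set.mem_setOf_eq, Finset.mem_union]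
    constructor
    · rintro ⟨h1, h2⟩ g hg n hn
      constructor <;> split_ifs with h
      · exact h1 g h.1 n h.2
      · trivial
      · exact h2 g h.1 n h.2
      · trivial
    · intro h
      constructor <;> intro g hg n hn
      · have := (h g (Or.inl hg) n (Or.inl hn)).1
        rwa [if_pos ⟨hg, hn⟩] at this
      · have := (h g (Or.inr hg) n (Or.inr hn)).2
        rwa [if_pos ⟨hg, hn⟩] at this
  refine MeasureTheory.ext_of_generate_finite C hgen hpi ?_ (by rw [measure_univ, measure_univ])
  rintro S ⟨s, T, D, rfl⟩
  -- value under μinf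
  have hAmeas : ∀ g, MeasurableSet {y : ℕ → ZMod 2 | ∀ n ∈ T g, y n ∈ D g n} :=
    fun g => box_measurable (T g) (D g) (fun n _ => MeasurableSet.of_discrete)
  have e1 : {x : F2 → ℕ → ZMod 2 | ∀ g ∈ s, ∀ n ∈ T g, x g n ∈ D g n}
      = {x | ∀ g ∈ s, x g ∈ {y : ℕ → ZMod 2 | ∀ n ∈ T g, y n ∈ D g n}} := rfl
  have hμinfS : μinf {x | ∀ g ∈ s, ∀ n ∈ T g, x g n ∈ D g n}
      = ∏ g ∈ s, ∏ n ∈ T g, u2 (D g n) := by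
    rw [e1, hμinf.2 s _ (fun g _ => hAmeas g)]
    exact Finset.prod_congr rfl fun g _ =>
      huinf.2 (T g) (D g) (fun n _ => MeasurableSet.of_discrete)
  -- value under the pushforward
  set tset : Finset (F2 × ℕ) := s.biUnion (fun g => (T g).image fun n => (g, n)) with htset
  have hmem : ∀ p : F2 × ℕ, p ∈ tset ↔ p.1 ∈ s ∧ p.2 ∈ T p.1 := by
    intro p
    rw [htset, Finset.mem_biUnion]
    constructor
    · rintro ⟨g, hg, hp⟩
      rw [Finset.mem_image] at hp
      obtain ⟨n, hn, rfl⟩ := hp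
      exact ⟨hg, hn⟩
    · rintro ⟨h1, h2⟩
      exact ⟨p.1, h1, Finset.mem_image.mpr ⟨p.2, h2, rfl⟩⟩
  have e2 : Phi ⁻¹' {x | ∀ g ∈ s, ∀ n ∈ T g, x g n ∈ D g n}
      = {x | ∀ p ∈ tset, Y p x ∈ D p.1 p.2} := by
    ext x
    simp only [Set.mem_preimage, Set.mem_setOf_eq, Phi]
    constructor
    · intro h p hp
      rw [hmem] at hp
      exact h p.1 hp.1 p.2 hp.2
    · intro h g hg n hn
      exact h (g, n) ((hmem (g, n)).mpr ⟨hg, hn⟩)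
  have hdisjim : (↑s : Set F2).PairwiseDisjoint fun g => (T g).image fun n => ((g, n) : F2 × ℕ) := by
    intro a _ b _ hab
    rw [Function.onFun, Finset.disjoint_left]
    intro p hp1 hp2
    rw [Finset.mem_image] at hp1 hp2
    obtain ⟨n, _, rfl⟩ := hp1
    obtain ⟨m, _, hm⟩ := hp2
    exact hab (congrArg Prod.fst hm).symm
  rw [Measure.map_apply measurable_Phi (box2_measurable s T D), e2,
    cylinder_box hμ₂ tset (fun p => D p.1 p.2), hμinfS, htset, Finset.prod_biUnion hdisjim]
  refine Finset.prod_congr rfl fun g _ => ?_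
  rw [Finset.prod_image]
  intro n _ m _ h
  exact (Prod.mk.injEq _ _ _ _).mp h |>.2

/-! ### Equivariance -/

lemma iterB_shift (n : ℕ) (u : F2) (x : F2 → ZMod 2) (g : F2) :
    iterB n (fun f => x (u⁻¹ * f)) g = iterB n x (u⁻¹ * g) := by
  induction n generalizing x g with
  | zero => rfl
  | succ n ih =>
    show iterB n (fun h => x (u⁻¹ * h) + x (u⁻¹ * (h * fb))) g
        = iterB n (fun h => x h + x (h * fb)) (u⁻¹ * g)
    rw [← ih (fun h => x h + x (h * fb)) g]
    congr 1
    funext h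
    rw [mul_assoc]

lemma Phi_equivariant (u : F2) (x : F2 → ZMod 2) :
    Phi (bshift F2 (ZMod 2) u x) = bshift F2 (ℕ → ZMod 2) u (Phi x) := by
  funext g n
  show Y (g, n) (fun f => x (u⁻¹ * f)) = Y (u⁻¹ * g, n) x
  simp only [Y, iterB_shift, mul_assoc]

end TimarAux
end

/-- **Tímar.** There is a factor map from the Bernoulli shift `(𝔽, U₂^𝔽, u₂^𝔽)` onto the
Bernoulli shift `(𝔽, U_∞^𝔽, u_∞^𝔽)`, where `U_∞ = (ℤ/2ℤ)^ℕ` and `u_∞ = u₂^ℕ`. -/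
theorem timar_factor_map
    (uinf : Measure (ℕ → ZMod 2)) (huinf : IsProductMeasure uinf (fun _ => u2))
    (μ₂ : Measure (F2 → ZMod 2)) (hμ₂ : IsProductMeasure μ₂ (fun _ => u2))
    (μinf : Measure (F2 → ℕ → ZMod 2)) (hμinf : IsProductMeasure μinf (fun _ => uinf)) :
    ∃ Φ : (F2 → ZMod 2) → F2 → ℕ → ZMod 2,
      IsFactorMap (bshift F2 (ZMod 2)) (bshift F2 (ℕ → ZMod 2)) μ₂ μinf Φ := by
  exact ⟨TimarAux.Phi, Set.univ, TimarAux.measurable_Phi, fun g => Set.mapsTo_univ _ _,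
    by simp, fun g x _ => TimarAux.Phi_equivariant g x, TimarAux.map_Phi huinf hμ₂ hμinf⟩
end
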